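/- Let T be a finite tree with a leaf v, and let T' be the tree obtained from T by adding a new path a-b on two vertices together with the edge joining a to v, and also adding a new vertex w joined by an edge to v. Then T' is eternal distance-2 domination critical if and only if T is eternal distance-2 domination critical. -/

import Mathlib

open SimpleGraph

universe u v

namespace EternalDom

variable {V : Type u} {W : Type v}

/-- `x` is within distance `k` of `y` in `G` (in particular, a path between them exists). -/
def WithinDist (G : SimpleGraph V) (k : ℕ) (x y : V) : Prop :=
  G.Reachable x y ∧ G.dist x y ≤ k

/-- A multiset of guards is distance-`k` dominating: every vertex is within
distance `k` of some guard. -/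
def IsDistKDomMultiset (G : SimpleGraph V) (k : ℕ) (D : Multiset V) : Prop :=
  ∀ w : V, ∃ x ∈ D, WithinDist G k x w

/-- `F` is an eternal distance-`k` defence family of guard configurations of size `m`:
a nonempty family of distance-`k` dominating multisets, all of cardinality `m`, such that
for every configuration `D ∈ F` and every attacked vertex `w` there is a configuration
`D' ∈ F` containing `w` that is obtained from `D` by a matching (bijection) moving each
guard a distance of at most `k`. -/
def IsEternalFamily (G : SimpleGraph V) (k m : ℕ) (F : Set (Multiset V)) : Prop :=
  F.Nonempty ∧
    (∀ D ∈ F, Multiset.card D = m ∧ IsDistKDomMultiset G k D) ∧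
    (∀ D ∈ F, ∀ w : V, ∃ D' ∈ F, w ∈ D' ∧ Multiset.Rel (WithinDist G k) D D')

/-- The eternal distance-`k` domination number `γ^∞_{all,k}(G)`. -/
noncomputable def eternalNum (G : SimpleGraph V) (k : ℕ) : ℕ :=
  sInf {m | ∃ F : Set (Multiset V), IsEternalFamily G k m F}

/-- `x` dominates `w`: they are equal or adjacent. -/
def Dominates (G : SimpleGraph V) (x w : V) : Prop := w = x ∨ G.Adj x w

/-- A dominating set of vertices. -/
def IsDomSet (G : SimpleGraph V) (D : Set V) : Prop := ∀ w : V, ∃ x ∈ D, Dominates G x w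

/-- The domination number `γ(G)`. -/
noncomputable def domNum (G : SimpleGraph V) : ℕ :=
  sInf {n | ∃ D : Set V, IsDomSet G D ∧ D.ncard = n}

/-- A distance-`k` dominating set of vertices. -/
def IsDistKDomSet (G : SimpleGraph V) (k : ℕ) (D : Set V) : Prop :=
  ∀ w : V, ∃ x ∈ D, WithinDist G k x w

/-- The distance-`k` domination number `γ_k(G)`. -/
noncomputable def distDomNum (G : SimpleGraph V) (k : ℕ) : ℕ :=
  sInf {n | ∃ D : Set V, IsDistKDomSet G k D ∧ D.ncard = n}

/-- A leaf: a vertex of degree 1, i.e. with a unique neighbour. -/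
def IsLeafV (G : SimpleGraph V) (x : V) : Prop := ∃! y, G.Adj x y

/-- A stem: a vertex adjacent to at least one leaf. -/
def IsStem (G : SimpleGraph V) (x : V) : Prop := ∃ y, G.Adj x y ∧ IsLeafV G y

/-- `k`-leaves: a `0`-leaf is a leaf; for `k > 0`, `v` is a `k`-leaf iff `v` is adjacent to
some `(k-1)`-leaf and all but at most one of the neighbours of `v` are `t`-leaves for some
`t < k`. -/
def IsKLeaf (G : SimpleGraph V) : ℕ → V → Prop
  | 0, v => IsLeafV G v
  | (k + 1), v =>
      (∃ u, G.Adj v u ∧ IsKLeaf G k u) ∧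
        ∃ w : V, ∀ x : V, G.Adj v x → x ≠ w → ∃ t, ∃ _ : t ≤ k, IsKLeaf G t x
  termination_by k _ => k
  decreasing_by all_goals omega

/-- For a 2-leaf `v`, the set `L(v)`: the union of `L[u]` over all neighbours `u` of `v`
which are 0-leaves or 1-leaves, where for a 1-leaf `u`, `L[u]` consists of `u` and the leaves
adjacent to `u`. -/
def Lopen (G : SimpleGraph V) (v : V) : Set V :=
  {x | ∃ u, G.Adj v u ∧
    ((IsKLeaf G 0 u ∧ x = u) ∨
      (IsKLeaf G 1 u ∧ (x = u ∨ (G.Adj u x ∧ IsKLeaf G 0 x))))}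

/-- For a 2-leaf `v`, the set `L[v] = L(v) ∪ {v}`. -/
def Lclosed (G : SimpleGraph V) (v : V) : Set V := insert v (Lopen G v)

/-- A graph is eternal distance-2 domination critical if deleting any non-cut vertex
(one whose removal leaves the graph connected) strictly decreases the eternal
distance-2 domination number. -/
def EternalCritical (G : SimpleGraph V) : Prop :=
  ∀ x : V, (G.induce {y | y ≠ x}).Connected →
    eternalNum (G.induce {y | y ≠ x}) 2 < eternalNum G 2

/-- Attach a pendant path `x₁ x₂ … xₙ` on `n` new vertices to the vertex `y`,
via the edge `y x₁`. -/
def attachPath (G : SimpleGraph V) (y : V) (n : ℕ) : SimpleGraph (V ⊕ Fin n) :=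
  G.map Sum.inl ⊔ (pathGraph n).map Sum.inr ⊔
    fromEdgeSet {e | ∃ h : 0 < n, e = s(Sum.inl y, Sum.inr ⟨0, h⟩)}

/-- The star `K_{1,m}`: centre `0`, leaves the `m` nonzero elements of `Fin (m+1)`. -/
def starGraph (m : ℕ) : SimpleGraph (Fin (m + 1)) where
  Adj x y := (x = 0 ∧ y ≠ 0) ∨ (y = 0 ∧ x ≠ 0)
  symm := ⟨by tauto⟩
  loopless := ⟨by rintro x (⟨h1, h2⟩ | ⟨h1, h2⟩) <;> exact h2 h1⟩

/-- Disjoint union of `G` and the star `K_{1,m}` together with one edge joining the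
vertex `a` of the star to the vertex `y` of `G`. -/
def attachStar (G : SimpleGraph V) (y : V) (m : ℕ) (a : Fin (m + 1)) :
    SimpleGraph (V ⊕ Fin (m + 1)) :=
  G.map Sum.inl ⊔ (starGraph m).map Sum.inr ⊔
    fromEdgeSet {s(Sum.inl y, Sum.inr a)}

/-- From `G` and a vertex `v`: add a new star `K_{1,m}` joined by an edge from its centre
to `v`, together with `t` new leaves adjacent to `v`. -/
def addStarAndLeaves (G : SimpleGraph V) (v : V) (m t : ℕ) :
    SimpleGraph (V ⊕ (Fin (m + 1) ⊕ Fin t)) :=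
  G.map Sum.inl ⊔
    (starGraph m).map (Sum.inr ∘ Sum.inl) ⊔
    fromEdgeSet ({s(Sum.inl v, Sum.inr (Sum.inl 0))} ∪
      {e | ∃ i : Fin t, e = s(Sum.inl v, Sum.inr (Sum.inr i))})

/-- From `G` and a vertex `v`: add two new stars `K_{1,m}` and `K_{1,M}`, joining the
centre of each new star to `v` by an edge. -/
def addTwoStars (G : SimpleGraph V) (v : V) (m M : ℕ) :
    SimpleGraph (V ⊕ (Fin (m + 1) ⊕ Fin (M + 1))) :=
  G.map Sum.inl ⊔
    (starGraph m).map (Sum.inr ∘ Sum.inl) ⊔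
    (starGraph M).map (Sum.inr ∘ Sum.inr) ⊔
    fromEdgeSet {s(Sum.inl v, Sum.inr (Sum.inl 0)), s(Sum.inl v, Sum.inr (Sum.inr 0))}

/-- The 1-sum of `G` and `H` at the vertex `u` of `G` and the vertex `w` of `H`:
the disjoint union of `G` and `H` with `u` and `w` identified. -/
def oneSum (G : SimpleGraph V) (H : SimpleGraph W) (u : V) (w : W) :
    SimpleGraph (V ⊕ {x : W // x ≠ w}) where
  Adj x y :=
    match x, y with
    | Sum.inl a, Sum.inl b => G.Adj a b
    | Sum.inr a, Sum.inr b => H.Adj a.1 b.1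
    | Sum.inl a, Sum.inr b => a = u ∧ H.Adj w b.1
    | Sum.inr a, Sum.inl b => b = u ∧ H.Adj w a.1
  symm := ⟨by
    rintro (a | a) (b | b) h
    · exact h.symm
    · exact h
    · exact h
    · exact h.symm⟩
  loopless := ⟨by
    rintro (a | a) h
    · exact G.loopless.irrefl a h
    · exact H.loopless.irrefl a.1 h⟩


section Infra

variable {α : Type*} {β : Type*}

lemma withinDist_refl (G : SimpleGraph α) (k : ℕ) (x : α) : WithinDist G k x x :=
  ⟨Reachable.refl x, by rw [SimpleGraph.dist_self]; exact Nat.zero_le k⟩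

lemma withinDist_symm {G : SimpleGraph α} {k : ℕ} {x y : α} (h : WithinDist G k x y) :
    WithinDist G k y x :=
  ⟨h.1.symm, by rw [SimpleGraph.dist_comm]; exact h.2⟩

lemma withinDist_trans {G : SimpleGraph α} {j k : ℕ} {x y z : α} (h : WithinDist G j x y)
    (h' : WithinDist G k y z) : WithinDist G (j + k) x z := by
  obtain ⟨p, hp⟩ := h.1.exists_walk_length_eq_dist
  obtain ⟨q, hq⟩ := h'.1.exists_walk_length_eq_dist
  refine ⟨h.1.trans h'.1, ?_⟩
  have h1 := SimpleGraph.dist_le (p.append q)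
  rw [SimpleGraph.Walk.length_append] at h1
  have := h.2; have := h'.2
  omega

lemma withinDist_mono {G : SimpleGraph α} {j k : ℕ} {x y : α} (hjk : j ≤ k)
    (h : WithinDist G j x y) : WithinDist G k x y :=
  ⟨h.1, h.2.trans hjk⟩

/-- 1-Lipschitz-or-collapsing vertex maps. -/
def IsLip (G : SimpleGraph α) (H : SimpleGraph β) (f : α → β) : Prop :=
  ∀ ⦃x y⦄, G.Adj x y → f x = f y ∨ H.Adj (f x) (f y)

lemma IsLip.exists_walk {G : SimpleGraph α} {H : SimpleGraph β} {f : α → β}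
    (hf : IsLip G H f) {x y : α} (p : G.Walk x y) :
    ∃ q : H.Walk (f x) (f y), q.length ≤ p.length := by
  induction p with
  | nil => exact ⟨SimpleGraph.Walk.nil, le_rfl⟩
  | @cons a b c h p ih =>
    obtain ⟨q, hq⟩ := ih
    rcases hf h with he | ha
    · refine ⟨q.copy he.symm rfl, ?_⟩
      rw [SimpleGraph.Walk.length_copy, SimpleGraph.Walk.length_cons]
      omega
    · refine ⟨SimpleGraph.Walk.cons ha q, ?_⟩
      rw [SimpleGraph.Walk.length_cons, SimpleGraph.Walk.length_cons]
      omega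

lemma IsLip.withinDist {G : SimpleGraph α} {H : SimpleGraph β} {f : α → β}
    (hf : IsLip G H f) {k : ℕ} {x y : α} (h : WithinDist G k x y) :
    WithinDist H k (f x) (f y) := by
  obtain ⟨p, hp⟩ := h.1.exists_walk_length_eq_dist
  obtain ⟨q, hq⟩ := hf.exists_walk p
  have h2 := h.2
  exact ⟨⟨q⟩, le_trans (SimpleGraph.dist_le q) (by omega)⟩

/-- Lower bounds on distances via level functions. -/
lemma level_bound {G : SimpleGraph α} (ψ : α → ℕ)
    (hψ : ∀ ⦃x y⦄, G.Adj x y → ψ y ≤ ψ x + 1) {k : ℕ} {x y : α}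
    (h : WithinDist G k x y) : ψ y ≤ ψ x + k := by
  obtain ⟨p, hp⟩ := h.1.exists_walk_length_eq_dist
  have key : ∀ {a b : α} (p : G.Walk a b), ψ b ≤ ψ a + p.length := by
    intro a b p
    induction p with
    | nil => simp
    | @cons a b c h p ih =>
      have := hψ h
      rw [SimpleGraph.Walk.length_cons]
      omega
  have := key p
  have h2 := h.2
  omega

lemma rel_map_of_rel {r : α → α → Prop} {s : β → β → Prop} {f : α → β}
    (hf : ∀ ⦃x y⦄, r x y → s (f x) (f y)) {D D' : Multiset α} (h : Multiset.Rel r D D') :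
    Multiset.Rel s (D.map f) (D'.map f) := by
  rw [Multiset.rel_map]
  exact h.mono (fun a _ b _ hr => hf hr)

lemma rel_refl_of_refl {r : α → α → Prop} (h : ∀ a, r a a) (D : Multiset α) :
    Multiset.Rel r D D :=
  Multiset.rel_refl_of_refl_on (fun x _ => h x)

/-- The rewiring lemma: delete `x` from `D` and `x₁` from `D₁` and push forward by `f`. -/
lemma rel_erase_rewire [DecidableEq α] {r : α → α → Prop} {s : β → β → Prop} {f : α → β}
    (hf : ∀ ⦃u w⦄, r u w → s (f u) (f w))
    {D D₁ : Multiset α} {x x₁ : α} (hx : x ∈ D) (hx₁ : x₁ ∈ D₁)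
    (hrel : Multiset.Rel r D D₁)
    (hpatch : ∀ ⦃u w⦄, r u x₁ → r x w → s (f u) (f w)) :
    Multiset.Rel s ((D.erase x).map f) ((D₁.erase x₁).map f) := by
  rw [← Multiset.cons_erase hx, Multiset.rel_cons_left] at hrel
  obtain ⟨b, bs, hxb, hrest, heq⟩ := hrel
  have hD₁ : x₁ ::ₘ D₁.erase x₁ = b ::ₘ bs := by rw [Multiset.cons_erase hx₁, heq]
  rcases Multiset.cons_eq_cons.mp hD₁ with ⟨hbx, hbs⟩ | ⟨hne, cs, h1, h2⟩
  · rw [hbs]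
    exact rel_map_of_rel hf hrest
  · rw [h2, Multiset.rel_cons_right] at hrest
    obtain ⟨u, us, hux₁, hrel', hDe⟩ := hrest
    rw [hDe, h1]
    rw [Multiset.map_cons, Multiset.map_cons]
    exact Multiset.Rel.cons (hpatch hux₁ hxb) (rel_map_of_rel hf hrel')

lemma eternalNum_le {G : SimpleGraph α} {k m : ℕ} {F : Set (Multiset α)}
    (h : IsEternalFamily G k m F) : eternalNum G k ≤ m :=
  Nat.sInf_le ⟨F, h⟩

lemma univFamily [Fintype α] (G : SimpleGraph α) (k : ℕ) :
    IsEternalFamily G k (Fintype.card α) {Finset.univ.val} := by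
  refine ⟨⟨_, rfl⟩, ?_, ?_⟩
  · rintro D rfl
    constructor
    · simp
    · intro w
      exact ⟨w, by simp, withinDist_refl G k w⟩
  · rintro D rfl w
    exact ⟨Finset.univ.val, rfl, by simp,
      rel_refl_of_refl (fun a => withinDist_refl G k a) _⟩

lemma exists_eternalFamily [Fintype α] (G : SimpleGraph α) (k : ℕ) :
    ∃ F, IsEternalFamily G k (eternalNum G k) F :=
  Nat.sInf_mem (s := {m | ∃ F : Set (Multiset α), IsEternalFamily G k m F})
    ⟨Fintype.card α, ⟨{Finset.univ.val}, univFamily G k⟩⟩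

lemma eternalNum_pos [Fintype α] [Nonempty α] (G : SimpleGraph α) (k : ℕ) :
    0 < eternalNum G k := by
  obtain ⟨F, hne, hdom, _⟩ := exists_eternalFamily G k
  obtain ⟨D, hD⟩ := hne
  obtain ⟨hcard, hdomD⟩ := hdom D hD
  obtain ⟨x, hx, _⟩ := hdomD (Classical.arbitrary α)
  rw [← hcard]
  exact Multiset.card_pos.mpr (fun h => by rw [h] at hx; simp at hx)

/-- Transfer of eternal families along graph isomorphisms. -/
lemma IsEternalFamily.map_iso {G : SimpleGraph α} {H : SimpleGraph β} (e : G ≃g H)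
    {k m : ℕ} {F : Set (Multiset α)} (h : IsEternalFamily G k m F) :
    IsEternalFamily H k m ((fun D => D.map e) '' F) := by
  have hlip : IsLip G H e := fun x y hxy => Or.inr (e.map_adj_iff.mpr hxy)
  obtain ⟨hne, hdom, hdef⟩ := h
  refine ⟨hne.image _, ?_, ?_⟩
  · rintro _ ⟨D, hD, rfl⟩
    obtain ⟨hcard, hdomD⟩ := hdom D hD
    refine ⟨by simp [hcard], ?_⟩
    intro w
    obtain ⟨x, hx, hwd⟩ := hdomD (e.symm w)
    refine ⟨e x, Multiset.mem_map_of_mem _ hx, ?_⟩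
    have := hlip.withinDist hwd
    rwa [e.apply_symm_apply] at this
  · rintro _ ⟨D, hD, rfl⟩ w
    obtain ⟨D', hD', hw, hrel⟩ := hdef D hD (e.symm w)
    refine ⟨D'.map e, ⟨D', hD', rfl⟩, ?_, ?_⟩
    · have := Multiset.mem_map_of_mem (e : α → β) hw
      rwa [e.apply_symm_apply] at this
    · exact rel_map_of_rel (fun x y hxy => hlip.withinDist hxy) hrel

lemma eternalNum_congr {G : SimpleGraph α} {H : SimpleGraph β} (e : G ≃g H) (k : ℕ)
    [Fintype α] [Fintype β] :
    eternalNum G k = eternalNum H k := by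
  apply le_antisymm
  · obtain ⟨F, hF⟩ := exists_eternalFamily H k
    exact eternalNum_le (hF.map_iso e.symm)
  · obtain ⟨F, hF⟩ := exists_eternalFamily G k
    exact eternalNum_le (hF.map_iso e)

lemma connected_congr {G : SimpleGraph α} {H : SimpleGraph β} (e : G ≃g H) :
    G.Connected ↔ H.Connected := by
  constructor
  · intro h
    haveI : Nonempty β := ⟨e h.nonempty.some⟩
    constructor
    intro x y
    simpa using (h.preconnected (e.symm x) (e.symm y)).map e.toHom
  · intro h
    haveI : Nonempty α := ⟨e.symm h.nonempty.some⟩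
    constructor
    intro x y
    simpa using (h.preconnected (e x) (e y)).map e.symm.toHom

end Infra
section Attach3

variable {α : Type*}

/-- Attach three new vertices to the graph `K`: pendant pattern `Pg` among the three
new vertices, and each `i ∈ att` joined to the attachment vertex `c`. -/
def attach3 (K : SimpleGraph α) (c : α) (Pg : SimpleGraph (Fin 3)) (att : Set (Fin 3)) :
    SimpleGraph (α ⊕ Fin 3) where
  Adj x y :=
    match x, y with
    | Sum.inl a, Sum.inl b => K.Adj a b
    | Sum.inl a, Sum.inr i => a = c ∧ i ∈ att
    | Sum.inr i, Sum.inl a => a = c ∧ i ∈ att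
    | Sum.inr i, Sum.inr j => Pg.Adj i j
  symm := ⟨by
    rintro (a|i) (b|j) h
    · exact h.symm
    · exact h
    · exact h
    · exact h.symm⟩
  loopless := ⟨by
    rintro (a|i) h
    · exact K.loopless.irrefl a h
    · exact Pg.loopless.irrefl i h⟩

@[simp] lemma attach3_adj_inl_inl {K : SimpleGraph α} {c : α} {Pg att} {a b : α} :
    (attach3 K c Pg att).Adj (Sum.inl a) (Sum.inl b) ↔ K.Adj a b := Iff.rfl

@[simp] lemma attach3_adj_inl_inr {K : SimpleGraph α} {c : α} {Pg att} {a : α} {i : Fin 3} :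
    (attach3 K c Pg att).Adj (Sum.inl a) (Sum.inr i) ↔ (a = c ∧ i ∈ att) := Iff.rfl

@[simp] lemma attach3_adj_inr_inl {K : SimpleGraph α} {c : α} {Pg att} {a : α} {i : Fin 3} :
    (attach3 K c Pg att).Adj (Sum.inr i) (Sum.inl a) ↔ (a = c ∧ i ∈ att) := Iff.rfl

@[simp] lemma attach3_adj_inr_inr {K : SimpleGraph α} {c : α} {Pg att} {i j : Fin 3} :
    (attach3 K c Pg att).Adj (Sum.inr i) (Sum.inr j) ↔ Pg.Adj i j := Iff.rfl

/-- retraction of the pendant part onto the attachment vertex -/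
def aProj (c : α) : α ⊕ Fin 3 → α := Sum.elim id (fun _ => c)

@[simp] lemma aProj_inl {c a : α} : aProj c (Sum.inl a) = a := rfl
@[simp] lemma aProj_inr {c : α} {i : Fin 3} : aProj c (Sum.inr i) = c := rfl

lemma isLip_inl {K : SimpleGraph α} {c : α} {Pg att} :
    IsLip K (attach3 K c Pg att) Sum.inl := fun _ _ h => Or.inr h

lemma isLip_aProj {K : SimpleGraph α} {c : α} {Pg att} :
    IsLip (attach3 K c Pg att) K (aProj c) := by
  rintro (a|i) (b|j) h
  · exact Or.inr h
  · exact Or.inl (by simpa using h.1)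
  · exact Or.inl (by simp; exact h.1.symm)
  · exact Or.inl rfl

lemma withinDist_inl {K : SimpleGraph α} {c : α} {Pg att} {k : ℕ} {a b : α}
    (h : WithinDist K k a b) :
    WithinDist (attach3 K c Pg att) k (Sum.inl a) (Sum.inl b) :=
  isLip_inl.withinDist h

lemma withinDist_aProj {K : SimpleGraph α} {c : α} {Pg att} {k : ℕ} {x y : α ⊕ Fin 3}
    (h : WithinDist (attach3 K c Pg att) k x y) :
    WithinDist K k (aProj c x) (aProj c y) :=
  isLip_aProj.withinDist h

lemma withinDist_of_adj {G : SimpleGraph α} {x y : α} (h : G.Adj x y) {k : ℕ} (hk : 1 ≤ k) :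
    WithinDist G k x y := by
  refine ⟨⟨SimpleGraph.Walk.cons h SimpleGraph.Walk.nil⟩, ?_⟩
  have := SimpleGraph.dist_le (SimpleGraph.Walk.cons h SimpleGraph.Walk.nil)
  simpa using le_trans this hk

/-- the three shapes -/
def gadgetPg : SimpleGraph (Fin 3) := SimpleGraph.fromEdgeSet {s(1,2)}
def gadgetAtt : Set (Fin 3) := {0, 1}
def p3Pg : SimpleGraph (Fin 3) := SimpleGraph.fromEdgeSet {s(0,1), s(1,2)}
def p3Att : Set (Fin 3) := {0}
def spiderPg : SimpleGraph (Fin 3) := SimpleGraph.fromEdgeSet {s(0,1), s(0,2)}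
def spiderAtt : Set (Fin 3) := {0}

lemma gadgetPg_adj {i j : Fin 3} : gadgetPg.Adj i j ↔ (i = 1 ∧ j = 2) ∨ (i = 2 ∧ j = 1) := by
  unfold gadgetPg
  rw [SimpleGraph.fromEdgeSet_adj]
  rw [Set.mem_singleton_iff, Sym2.eq_iff]
  constructor
  · rintro ⟨(⟨rfl, rfl⟩ | ⟨rfl, rfl⟩), hne⟩
    · exact Or.inl ⟨rfl, rfl⟩
    · exact Or.inr ⟨rfl, rfl⟩
  · rintro (⟨rfl, rfl⟩ | ⟨rfl, rfl⟩) <;> exact ⟨by tauto, by decide⟩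

lemma p3Pg_adj {i j : Fin 3} : p3Pg.Adj i j ↔
    (i = 0 ∧ j = 1) ∨ (i = 1 ∧ j = 0) ∨ (i = 1 ∧ j = 2) ∨ (i = 2 ∧ j = 1) := by
  unfold p3Pg
  rw [SimpleGraph.fromEdgeSet_adj]
  rw [Set.mem_insert_iff, Set.mem_singleton_iff, Sym2.eq_iff, Sym2.eq_iff]
  constructor
  · rintro ⟨((⟨rfl, rfl⟩ | ⟨rfl, rfl⟩) | (⟨rfl, rfl⟩ | ⟨rfl, rfl⟩)), hne⟩ <;> tauto
  · rintro (⟨rfl, rfl⟩ | ⟨rfl, rfl⟩ | ⟨rfl, rfl⟩ | ⟨rfl, rfl⟩) <;> exact ⟨by tauto, by decide⟩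

lemma spiderPg_adj {i j : Fin 3} : spiderPg.Adj i j ↔
    (i = 0 ∧ j = 1) ∨ (i = 1 ∧ j = 0) ∨ (i = 0 ∧ j = 2) ∨ (i = 2 ∧ j = 0) := by
  unfold spiderPg
  rw [SimpleGraph.fromEdgeSet_adj]
  rw [Set.mem_insert_iff, Set.mem_singleton_iff, Sym2.eq_iff, Sym2.eq_iff]
  constructor
  · rintro ⟨((⟨rfl, rfl⟩ | ⟨rfl, rfl⟩) | (⟨rfl, rfl⟩ | ⟨rfl, rfl⟩)), hne⟩ <;> tauto
  · rintro (⟨rfl, rfl⟩ | ⟨rfl, rfl⟩ | ⟨rfl, rfl⟩ | ⟨rfl, rfl⟩) <;> exact ⟨by tauto, by decide⟩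

end Attach3
section ShapeFacts

variable {α : Type*}

lemma dist_le_one_of_adj {K : SimpleGraph α} {a b : α} (h : K.Adj a b) : K.dist a b ≤ 1 := by
  have := SimpleGraph.dist_le (SimpleGraph.Walk.cons h SimpleGraph.Walk.nil)
  simpa using this

lemma min2_lip {K : SimpleGraph α} (hc : K.Connected) {a b : α} (h : K.Adj a b) (y : α) :
    min 2 (K.dist b y) ≤ min 2 (K.dist a y) + 1 := by
  have htri : K.dist b y ≤ K.dist b a + K.dist a y := hc.dist_triangle
  have hba : K.dist b a ≤ 1 := dist_le_one_of_adj h.symm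
  have h2 : K.dist b y ≤ K.dist a y + 1 := by omega
  rcases le_total 2 (K.dist a y) with hh | hh
  · rw [min_eq_left hh]
    exact le_trans (min_le_left _ _) (by omega)
  · rw [min_eq_right hh]
    exact le_trans (min_le_right _ _) h2

lemma eq_of_dist_eq_zero {K : SimpleGraph α} (hc : K.Connected) {a b : α}
    (h : K.dist a b = 0) : a = b := by
  rcases SimpleGraph.dist_eq_zero_iff_eq_or_not_reachable.mp h with h' | h'
  · exact h'
  · exact absurd (hc.preconnected a b) h'

/-- pendant-ball fact, valid for both `gadget` and `p3` shapes (any shape whose pendant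
graph has no edge between `att`-vertices and ... in fact valid for any shape) -/
lemma ball_pendant_to_base {K : SimpleGraph α} (hc : K.Connected) {c : α}
    {Pg : SimpleGraph (Fin 3)} {att : Set (Fin 3)} {y : α} {i : Fin 3}
    (h : WithinDist (attach3 K c Pg att) 2 (Sum.inl y) (Sum.inr i)) :
    WithinDist K 1 y c := by
  have hlb := level_bound
    (G := attach3 K c Pg att)
    (Sum.elim (fun y' => min 2 (K.dist y' y)) (fun _ => min 2 (K.dist c y) + 1))
    (by
      rintro (a|i') (b|j') hadj
      · exact min2_lip hc hadj y
      · simp only [Sum.elim_inl, Sum.elim_inr]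
        obtain ⟨rfl, -⟩ := hadj
        omega
      · simp only [Sum.elim_inl, Sum.elim_inr]
        obtain ⟨rfl, -⟩ := hadj
        omega
      · simp only [Sum.elim_inr]
        omega)
    h
  simp only [Sum.elim_inl, Sum.elim_inr, SimpleGraph.dist_self, min_eq_right (Nat.zero_le 2)] at hlb
  have hcy : min 2 (K.dist c y) ≤ 1 := by omega
  have : K.dist c y ≤ 1 := by
    rcases le_total 2 (K.dist c y) with hh | hh
    · rw [min_eq_left hh] at hcy; omega
    · rw [min_eq_right hh] at hcy; omega
  exact ⟨hc.preconnected y c, by rwa [SimpleGraph.dist_comm]⟩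

/-- in the `gadget` shape, the far pendant vertex `2` is at distance `≥ 3` from every
base vertex other than `c`. -/
lemma gadget_ball_far {K : SimpleGraph α} (hc : K.Connected) {c : α} {y : α}
    (h : WithinDist (attach3 K c gadgetPg gadgetAtt) 2 (Sum.inl y) (Sum.inr 2)) :
    y = c := by
  have hlb := level_bound
    (G := attach3 K c gadgetPg gadgetAtt)
    (Sum.elim (fun y' => min 2 (K.dist y' y))
      (fun i => if i = 2 then min 2 (K.dist c y) + 2 else min 2 (K.dist c y) + 1))
    (by
      rintro (a|i') (b|j') hadj
      · exact min2_lip hc hadj y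
      · simp only [Sum.elim_inl, Sum.elim_inr]
        obtain ⟨rfl, hmem⟩ := hadj
        have : j' = 0 ∨ j' = 1 := by
          have := hmem
          simp [gadgetAtt] at this
          tauto
        rcases this with rfl | rfl
        · rw [if_neg (by decide)]
        · rw [if_neg (by decide)]
      · simp only [Sum.elim_inl, Sum.elim_inr]
        obtain ⟨rfl, -⟩ := hadj
        split <;> omega
      · simp only [Sum.elim_inr]
        have := gadgetPg_adj.mp hadj
        rcases this with ⟨rfl, rfl⟩ | ⟨rfl, rfl⟩
        · rw [if_pos rfl, if_neg (by decide)]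
        · rw [if_neg (by decide), if_pos rfl]; omega)
    h
  simp only [Sum.elim_inl, Sum.elim_inr, SimpleGraph.dist_self,
    min_eq_right (Nat.zero_le 2), reduceIte] at hlb
  have : min 2 (K.dist c y) = 0 := by omega
  have hdist : K.dist c y = 0 := by
    rcases le_total 2 (K.dist c y) with hh | hh
    · rw [min_eq_left hh] at this; omega
    · rw [min_eq_right hh] at this; omega
  exact (eq_of_dist_eq_zero hc hdist).symm

/-- in the `gadget` shape, the pendant vertices `0` and `2` are at distance 3. -/
lemma gadget_w_far_b {K : SimpleGraph α} {c : α}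
    (h : WithinDist (attach3 K c gadgetPg gadgetAtt) 2 (Sum.inr 0) (Sum.inr 2)) : False := by
  have hlb := level_bound
    (G := attach3 K c gadgetPg gadgetAtt)
    (Sum.elim (fun _ => 1) (fun i => if i = 0 then 0 else if i = 2 then 3 else 2))
    (by
      rintro (a|i') (b|j') hadj
      · simp
      · simp only [Sum.elim_inl, Sum.elim_inr]
        obtain ⟨rfl, hmem⟩ := hadj
        have : j' = 0 ∨ j' = 1 := by simp [gadgetAtt] at hmem; tauto
        rcases this with rfl | rfl <;> simp
      · simp only [Sum.elim_inl, Sum.elim_inr]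
        split <;> simp <;> omega
      · simp only [Sum.elim_inr]
        have := gadgetPg_adj.mp hadj
        rcases this with ⟨rfl, rfl⟩ | ⟨rfl, rfl⟩ <;> simp)
    h
  simp at hlb

/-- in the `p3` shape, the far pendant vertex `2` is at distance `≥ 3` from all base
vertices. -/
lemma p3_ball_far {K : SimpleGraph α} {c : α} {y : α}
    (h : WithinDist (attach3 K c p3Pg p3Att) 2 (Sum.inl y) (Sum.inr 2)) : False := by
  have hlb := level_bound
    (G := attach3 K c p3Pg p3Att)
    (Sum.elim (fun _ => 0) (fun i => i.val + 1))
    (by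
      rintro (a|i') (b|j') hadj
      · simp
      · simp only [Sum.elim_inl, Sum.elim_inr]
        obtain ⟨rfl, hmem⟩ := hadj
        have : j' = 0 := by simpa [p3Att] using hmem
        subst this; simp
      · simp only [Sum.elim_inl, Sum.elim_inr]; omega
      · simp only [Sum.elim_inr]
        have := p3Pg_adj.mp hadj
        rcases this with ⟨rfl, rfl⟩ | ⟨rfl, rfl⟩ | ⟨rfl, rfl⟩ | ⟨rfl, rfl⟩ <;> simp)
    h
  simp at hlb

end ShapeFacts
section UpperBounds

variable {α : Type*}

lemma rel_single {r : α → α → Prop} {a b : α} (h : r a b) :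
    Multiset.Rel r {a} {b} := by
  rw [← Multiset.cons_zero a, ← Multiset.cons_zero b]
  exact Multiset.Rel.cons h Multiset.Rel.zero

lemma rel_map_refl {G : SimpleGraph α} {β : Type*} {H : SimpleGraph β} {f : α → β} {k : ℕ}
    (hf : IsLip G H f) {r : α → α → Prop} : True := trivial

/-- Upper bound, simple shapes: if all three pendant vertices are pairwise within
distance 2, one extra guard suffices. -/
lemma upper_simple {K : SimpleGraph α} {c : α} {Pg : SimpleGraph (Fin 3)} {att : Set (Fin 3)}
    (hPP : ∀ i j : Fin 3, WithinDist (attach3 K c Pg att) 2 (Sum.inr i) (Sum.inr j))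
    {m : ℕ} {F : Set (Multiset α)} (hF : IsEternalFamily K 2 m F) :
    ∃ F', IsEternalFamily (attach3 K c Pg att) 2 (m + 1) F' := by
  obtain ⟨hne, hmem, hdef⟩ := hF
  refine ⟨{E | ∃ D ∈ F, ∃ i : Fin 3, E = Sum.inr i ::ₘ D.map Sum.inl}, ?_, ?_, ?_⟩
  · obtain ⟨D, hD⟩ := hne
    exact ⟨_, D, hD, 0, rfl⟩
  · rintro E ⟨D, hD, i, rfl⟩
    obtain ⟨hcard, hdom⟩ := hmem D hD
    constructor
    · simp [hcard]
    · rintro (y | j)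
      · obtain ⟨x, hx, hw⟩ := hdom y
        exact ⟨Sum.inl x, Multiset.mem_cons_of_mem (Multiset.mem_map_of_mem _ hx),
          withinDist_inl hw⟩
      · exact ⟨Sum.inr i, Multiset.mem_cons_self _ _, hPP i j⟩
  · rintro E ⟨D, hD, i, rfl⟩ (y | j)
    · obtain ⟨D', hD', hy, hrel⟩ := hdef D hD y
      refine ⟨Sum.inr i ::ₘ D'.map Sum.inl, ⟨D', hD', i, rfl⟩,
        Multiset.mem_cons_of_mem (Multiset.mem_map_of_mem _ hy), ?_⟩
      exact Multiset.Rel.cons (withinDist_refl _ _ _)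
        (rel_map_of_rel (fun _ _ h => withinDist_inl h) hrel)
    · refine ⟨Sum.inr j ::ₘ D.map Sum.inl, ⟨D, hD, j, rfl⟩, Multiset.mem_cons_self _ _, ?_⟩
      exact Multiset.Rel.cons (hPP i j)
        (rel_refl_of_refl (fun a => withinDist_refl _ _ _) _)

lemma pendant_pairs_p3 {K : SimpleGraph α} {c : α} (i j : Fin 3) :
    WithinDist (attach3 K c p3Pg p3Att) 2 (Sum.inr i) (Sum.inr j) := by
  have h01 : (attach3 K c p3Pg p3Att).Adj (Sum.inr 0) (Sum.inr 1) := by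
    rw [attach3_adj_inr_inr, p3Pg_adj]; tauto
  have h12 : (attach3 K c p3Pg p3Att).Adj (Sum.inr 1) (Sum.inr 2) := by
    rw [attach3_adj_inr_inr, p3Pg_adj]; tauto
  have w01 : WithinDist (attach3 K c p3Pg p3Att) 1 (Sum.inr 0) (Sum.inr 1) :=
    withinDist_of_adj h01 le_rfl
  have w12 : WithinDist (attach3 K c p3Pg p3Att) 1 (Sum.inr 1) (Sum.inr 2) :=
    withinDist_of_adj h12 le_rfl
  fin_cases i <;> fin_cases j
  · exact withinDist_refl _ _ _
  · exact withinDist_mono (by norm_num) w01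
  · exact withinDist_trans w01 w12
  · exact withinDist_mono (by norm_num) (withinDist_symm w01)
  · exact withinDist_refl _ _ _
  · exact withinDist_mono (by norm_num) w12
  · exact withinDist_trans (withinDist_symm w12) (withinDist_symm w01)
  · exact withinDist_mono (by norm_num) (withinDist_symm w12)
  · exact withinDist_refl _ _ _

lemma pendant_pairs_spider {K : SimpleGraph α} {c : α} (i j : Fin 3) :
    WithinDist (attach3 K c spiderPg spiderAtt) 2 (Sum.inr i) (Sum.inr j) := by
  have h01 : (attach3 K c spiderPg spiderAtt).Adj (Sum.inr 0) (Sum.inr 1) := by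
    rw [attach3_adj_inr_inr, spiderPg_adj]; tauto
  have h02 : (attach3 K c spiderPg spiderAtt).Adj (Sum.inr 0) (Sum.inr 2) := by
    rw [attach3_adj_inr_inr, spiderPg_adj]; tauto
  have w01 : WithinDist (attach3 K c spiderPg spiderAtt) 1 (Sum.inr 0) (Sum.inr 1) :=
    withinDist_of_adj h01 le_rfl
  have w02 : WithinDist (attach3 K c spiderPg spiderAtt) 1 (Sum.inr 0) (Sum.inr 2) :=
    withinDist_of_adj h02 le_rfl
  fin_cases i <;> fin_cases j
  · exact withinDist_refl _ _ _
  · exact withinDist_mono (by norm_num) w01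
  · exact withinDist_mono (by norm_num) w02
  · exact withinDist_mono (by norm_num) (withinDist_symm w01)
  · exact withinDist_refl _ _ _
  · exact withinDist_trans (withinDist_symm w01) w02
  · exact withinDist_mono (by norm_num) (withinDist_symm w02)
  · exact withinDist_trans (withinDist_symm w02) w01
  · exact withinDist_refl _ _ _

/-- Upper bound for the gadget shape. -/
lemma upper_gadget [DecidableEq α] {K : SimpleGraph α} {c : α}
    {m : ℕ} {F : Set (Multiset α)} (hF : IsEternalFamily K 2 m F) :
    ∃ F', IsEternalFamily (attach3 K c gadgetPg gadgetAtt) 2 (m + 1) F' := by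
  classical
  obtain ⟨hne, hmem, hdef⟩ := hF
  set H := attach3 K c gadgetPg gadgetAtt with hHdef
  have hc0 : H.Adj (Sum.inl c) (Sum.inr 0) := by
    rw [hHdef, attach3_adj_inl_inr]; exact ⟨rfl, by simp [gadgetAtt]⟩
  have hc1 : H.Adj (Sum.inl c) (Sum.inr 1) := by
    rw [hHdef, attach3_adj_inl_inr]; exact ⟨rfl, by simp [gadgetAtt]⟩
  have h12 : H.Adj (Sum.inr 1) (Sum.inr 2) := by
    rw [hHdef, attach3_adj_inr_inr, gadgetPg_adj]; tauto
  have wc0 : WithinDist H 1 (Sum.inl c) (Sum.inr 0) := withinDist_of_adj hc0 le_rfl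
  have wc1 : WithinDist H 1 (Sum.inl c) (Sum.inr 1) := withinDist_of_adj hc1 le_rfl
  have w12 : WithinDist H 1 (Sum.inr 1) (Sum.inr 2) := withinDist_of_adj h12 le_rfl
  have wc2 : WithinDist H 2 (Sum.inl c) (Sum.inr 2) := withinDist_trans wc1 w12
  have w01 : WithinDist H 2 (Sum.inr 0) (Sum.inr 1) :=
    withinDist_trans (withinDist_symm wc0) wc1
  -- the admissible extra-guard positions
  let Qcond : Multiset α → (α ⊕ Fin 3) → Prop := fun D q =>
    (q = Sum.inl c ∨ q = Sum.inr 1) ∨ (c ∈ D ∧ (q = Sum.inr 0 ∨ q = Sum.inr 2))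
  -- any admissible guard is within distance 2 of `inl c` and of `inr 1`
  have hqc : ∀ D q, Qcond D q → WithinDist H 2 q (Sum.inl c) := by
    rintro D q ((rfl | rfl) | ⟨-, (rfl | rfl)⟩)
    · exact withinDist_refl _ _ _
    · exact withinDist_mono (by norm_num) (withinDist_symm wc1)
    · exact withinDist_mono (by norm_num) (withinDist_symm wc0)
    · exact withinDist_symm wc2
  have hqa : ∀ D q, Qcond D q → WithinDist H 2 q (Sum.inr 1) := by
    rintro D q ((rfl | rfl) | ⟨-, (rfl | rfl)⟩)
    · exact withinDist_mono (by norm_num) wc1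
    · exact withinDist_refl _ _ _
    · exact w01
    · exact withinDist_mono (by norm_num) (withinDist_symm w12)
  refine ⟨{E | ∃ D ∈ F, ∃ q, Qcond D q ∧ E = q ::ₘ D.map Sum.inl}, ?_, ?_, ?_⟩
  · obtain ⟨D, hD⟩ := hne
    exact ⟨_, D, hD, Sum.inr 1, Or.inl (Or.inr rfl), rfl⟩
  · rintro E ⟨D, hD, q, hq, rfl⟩
    obtain ⟨hcard, hdom⟩ := hmem D hD
    constructor
    · simp [hcard]
    · rintro (y | j)
      · obtain ⟨x, hx, hw⟩ := hdom y
        exact ⟨Sum.inl x, Multiset.mem_cons_of_mem (Multiset.mem_map_of_mem _ hx),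
          withinDist_inl hw⟩
      · -- pendant vertices: either the extra guard or a guard at c covers them
        have hcov : ∀ x : α ⊕ Fin 3, (x = Sum.inl c ∨ x = Sum.inr 1) →
            WithinDist H 2 x (Sum.inr j) := by
          rintro x (rfl | rfl)
          · fin_cases j
            · exact withinDist_mono (by norm_num) wc0
            · exact withinDist_mono (by norm_num) wc1
            · exact wc2
          · fin_cases j
            · exact withinDist_symm w01
            · exact withinDist_refl _ _ _
            · exact withinDist_mono (by norm_num) w12
        rcases hq with (rfl | rfl) | ⟨hcD, (rfl | rfl)⟩
        · exact ⟨Sum.inl c, Multiset.mem_cons_self _ _, hcov _ (Or.inl rfl)⟩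
        · exact ⟨Sum.inr 1, Multiset.mem_cons_self _ _, hcov _ (Or.inr rfl)⟩
        · exact ⟨Sum.inl c, Multiset.mem_cons_of_mem (Multiset.mem_map_of_mem _ hcD),
            hcov _ (Or.inl rfl)⟩
        · exact ⟨Sum.inl c, Multiset.mem_cons_of_mem (Multiset.mem_map_of_mem _ hcD),
            hcov _ (Or.inl rfl)⟩
  · rintro E ⟨D, hD, q, hq, rfl⟩ x
    have hrelmap : ∀ {D₁ D₂ : Multiset α}, Multiset.Rel (WithinDist K 2) D₁ D₂ →
        Multiset.Rel (WithinDist H 2) (D₁.map Sum.inl) (D₂.map Sum.inl) :=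
      fun h => rel_map_of_rel (fun _ _ hw => withinDist_inl hw) h
    have hmaprefl : ∀ (D₁ : Multiset α),
        Multiset.Rel (WithinDist H 2) (D₁.map Sum.inl) (D₁.map Sum.inl) :=
      fun D₁ => rel_refl_of_refl (fun a => withinDist_refl _ _ _) _
    rcases x with y | j
    · -- attack in the base graph
      obtain ⟨D', hD', hy, hrel⟩ := hdef D hD y
      refine ⟨Sum.inr 1 ::ₘ D'.map Sum.inl, ⟨D', hD', Sum.inr 1, Or.inl (Or.inr rfl), rfl⟩,
        Multiset.mem_cons_of_mem (Multiset.mem_map_of_mem _ hy), ?_⟩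
      exact Multiset.Rel.cons (hqa D q hq) (hrelmap hrel)
    · -- attack on a pendant vertex
      fin_cases j
      · -- attack w = inr 0
        rcases hq with (rfl | rfl) | ⟨hcD, (rfl | rfl)⟩
        · -- extra guard at c : respond by K-attack at c, move extra guard to w
          obtain ⟨D', hD', hcmem, hrel⟩ := hdef D hD c
          refine ⟨Sum.inr 0 ::ₘ D'.map Sum.inl,
            ⟨D', hD', Sum.inr 0, Or.inr ⟨hcmem, Or.inl rfl⟩, rfl⟩,
            Multiset.mem_cons_self _ _, ?_⟩
          exact Multiset.Rel.cons (withinDist_mono (by norm_num) wc0) (hrelmap hrel)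
        · obtain ⟨D', hD', hcmem, hrel⟩ := hdef D hD c
          refine ⟨Sum.inr 0 ::ₘ D'.map Sum.inl,
            ⟨D', hD', Sum.inr 0, Or.inr ⟨hcmem, Or.inl rfl⟩, rfl⟩,
            Multiset.mem_cons_self _ _, ?_⟩
          exact Multiset.Rel.cons (withinDist_symm w01) (hrelmap hrel)
        · exact ⟨Sum.inr 0 ::ₘ D.map Sum.inl, ⟨D, hD, Sum.inr 0, Or.inr ⟨hcD, Or.inl rfl⟩, rfl⟩,
            Multiset.mem_cons_self _ _,
            Multiset.Rel.cons (withinDist_refl _ _ _) (hmaprefl D)⟩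
        · -- extra guard at b, attack w : swap with the guard at c
          refine ⟨Sum.inr 0 ::ₘ D.map Sum.inl, ⟨D, hD, Sum.inr 0, Or.inr ⟨hcD, Or.inl rfl⟩, rfl⟩,
            Multiset.mem_cons_self _ _, ?_⟩
          -- D = c ::ₘ D.erase c
          rw [← Multiset.cons_erase hcD, Multiset.map_cons]
          -- Rel (inr 2 ::ₘ inl c ::ₘ M) (inr 0 ::ₘ inl c ::ₘ M)
          rw [Multiset.cons_swap (Sum.inr 0)]
          exact Multiset.Rel.cons (withinDist_symm wc2)
            (Multiset.Rel.cons (withinDist_mono (by norm_num) wc0)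
              (hmaprefl _))
      · -- attack a = inr 1
        exact ⟨Sum.inr 1 ::ₘ D.map Sum.inl, ⟨D, hD, Sum.inr 1, Or.inl (Or.inr rfl), rfl⟩,
          Multiset.mem_cons_self _ _,
          Multiset.Rel.cons (hqa D q hq) (hmaprefl D)⟩
      · -- attack b = inr 2
        rcases hq with (rfl | rfl) | ⟨hcD, (rfl | rfl)⟩
        · obtain ⟨D', hD', hcmem, hrel⟩ := hdef D hD c
          refine ⟨Sum.inr 2 ::ₘ D'.map Sum.inl,
            ⟨D', hD', Sum.inr 2, Or.inr ⟨hcmem, Or.inr rfl⟩, rfl⟩,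
            Multiset.mem_cons_self _ _, ?_⟩
          exact Multiset.Rel.cons wc2 (hrelmap hrel)
        · obtain ⟨D', hD', hcmem, hrel⟩ := hdef D hD c
          refine ⟨Sum.inr 2 ::ₘ D'.map Sum.inl,
            ⟨D', hD', Sum.inr 2, Or.inr ⟨hcmem, Or.inr rfl⟩, rfl⟩,
            Multiset.mem_cons_self _ _, ?_⟩
          exact Multiset.Rel.cons (withinDist_mono (by norm_num) w12) (hrelmap hrel)
        · -- extra guard at w, attack b : swap with the guard at c
          refine ⟨Sum.inr 2 ::ₘ D.map Sum.inl, ⟨D, hD, Sum.inr 2, Or.inr ⟨hcD, Or.inr rfl⟩, rfl⟩,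
            Multiset.mem_cons_self _ _, ?_⟩
          rw [← Multiset.cons_erase hcD, Multiset.map_cons]
          rw [Multiset.cons_swap (Sum.inr 2)]
          exact Multiset.Rel.cons (withinDist_mono (by norm_num) (withinDist_symm wc0))
            (Multiset.Rel.cons wc2 (hmaprefl _))
        · exact ⟨Sum.inr 2 ::ₘ D.map Sum.inl, ⟨D, hD, Sum.inr 2, Or.inr ⟨hcD, Or.inr rfl⟩, rfl⟩,
            Multiset.mem_cons_self _ _,
            Multiset.Rel.cons (withinDist_refl _ _ _) (hmaprefl D)⟩

end UpperBounds
section LowerBounds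

variable {α : Type*}

lemma eq_of_mem_not_mem_erase [DecidableEq α] {D : Multiset α} {o g : α}
    (ho : o ∈ D) (h : o ∉ D.erase g) : o = g := by
  by_contra hne
  exact h ((Multiset.mem_erase_of_ne hne).mpr ho)

/-- Lower bound for the `p3` shape. -/
lemma lower_p3 [DecidableEq α] {K : SimpleGraph α} (hc : K.Connected) {c : α}
    {m : ℕ} {F : Set (Multiset (α ⊕ Fin 3))}
    (hF : IsEternalFamily (attach3 K c p3Pg p3Att) 2 m F) :
    ∃ F', IsEternalFamily K 2 (m - 1) F' := by
  classical
  obtain ⟨hne, hmem, hdef⟩ := hF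
  set H := attach3 K c p3Pg p3Att with hHdef
  have pend : ∀ x : α ⊕ Fin 3, WithinDist H 2 x (Sum.inr 2) → ∃ j : Fin 3, x = Sum.inr j := by
    rintro (y | j) h
    · exact absurd h p3_ball_far
    · exact ⟨j, rfl⟩
  have toC : ∀ {u : α ⊕ Fin 3} {i : Fin 3}, WithinDist H 2 u (Sum.inr i) →
      WithinDist K 1 (aProj c u) c := by
    rintro (y | j) i h
    · exact ball_pendant_to_base hc h
    · exact withinDist_refl _ _ _
  have hproj : ∀ ⦃u w : α ⊕ Fin 3⦄, WithinDist H 2 u w →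
      WithinDist K 2 (aProj c u) (aProj c w) := fun u w h => withinDist_aProj h
  -- every configuration admits a valid pendant deletion
  have DOM : ∀ D ∈ F, ∃ g ∈ D, (∃ j : Fin 3, g = Sum.inr j) ∧
      IsDistKDomMultiset K 2 ((D.erase g).map (aProj c)) := by
    intro D hD
    obtain ⟨hcard, hdom⟩ := hmem D hD
    obtain ⟨g, hg, hgw⟩ := hdom (Sum.inr 2)
    obtain ⟨j, rfl⟩ := pend g hgw
    by_cases h2 : ∃ j' : Fin 3, Sum.inr j' ∈ D.erase (Sum.inr j)
    · refine ⟨_, hg, ⟨j, rfl⟩, ?_⟩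
      intro t
      obtain ⟨x, hx, hxw⟩ := hdom (Sum.inl t)
      by_cases hxg : x ∈ D.erase (Sum.inr j)
      · exact ⟨aProj c x, Multiset.mem_map_of_mem _ hxg, hproj hxw⟩
      · have hxj : x = Sum.inr j := eq_of_mem_not_mem_erase hx hxg
        subst hxj
        obtain ⟨j', hj'⟩ := h2
        refine ⟨aProj c (Sum.inr j'), Multiset.mem_map_of_mem _ hj', ?_⟩
        have h1 : WithinDist K 1 t c := ball_pendant_to_base hc (withinDist_symm hxw)
        exact withinDist_mono (by norm_num) (withinDist_symm h1)
    · refine ⟨_, hg, ⟨j, rfl⟩, ?_⟩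
      by_contra hgap
      unfold IsDistKDomMultiset at hgap
      push_neg at hgap
      obtain ⟨t₀, hgap⟩ := hgap
      have gapK : ∀ x ∈ D.erase (Sum.inr j), ¬ WithinDist K 2 (aProj c x) t₀ := fun x hx hw =>
        hgap (aProj c x) (Multiset.mem_map_of_mem _ hx) hw
      -- t₀ is only dominated by the pendant guard, hence t₀ is near c
      obtain ⟨x₀, hx₀, hx₀w⟩ := hdom (Sum.inl t₀)
      have hx₀j : x₀ = Sum.inr j := by
        refine eq_of_mem_not_mem_erase hx₀ (fun hmem' => ?_)
        exact gapK x₀ hmem' (by simpa using hproj hx₀w)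
      subst hx₀j
      have ht₀c : WithinDist K 1 t₀ c := ball_pendant_to_base hc (withinDist_symm hx₀w)
      -- attack t₀
      obtain ⟨D₁, hD₁, ht₀, hrel⟩ := hdef D hD (Sum.inl t₀)
      rw [← Multiset.cons_erase ht₀, Multiset.rel_cons_right] at hrel
      obtain ⟨o, D', ho, hrel', hDeq⟩ := hrel
      have hoD : o ∈ D := hDeq ▸ Multiset.mem_cons_self _ _
      have hoj : o = Sum.inr j := by
        refine eq_of_mem_not_mem_erase hoD (fun hmem' => ?_)
        exact gapK o hmem' (by simpa using hproj ho)
      have hD' : D' = D.erase (Sum.inr j) := by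
        rw [hDeq, hoj, Multiset.erase_cons_head]
      -- the new configuration still has a pendant guard; find its origin
      obtain ⟨hcard₁, hdom₁⟩ := hmem D₁ hD₁
      obtain ⟨z, hz, hzw⟩ := hdom₁ (Sum.inr 2)
      obtain ⟨j₁, rfl⟩ := pend z hzw
      have hz' : Sum.inr j₁ ∈ D₁.erase (Sum.inl t₀) :=
        (Multiset.mem_erase_of_ne (by simp)).mpr hz
      rw [← Multiset.cons_erase hz', Multiset.rel_cons_right] at hrel'
      obtain ⟨o₂, D'', ho₂, _, hDeq₂⟩ := hrel'
      have ho₂mem : o₂ ∈ D.erase (Sum.inr j) := by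
        rw [← hD', hDeq₂]; exact Multiset.mem_cons_self _ _
      exact gapK o₂ ho₂mem (withinDist_trans (toC ho₂) (withinDist_symm ht₀c))
  -- the resulting family
  refine ⟨{E | ∃ D ∈ F, ∃ g ∈ D, (∃ j : Fin 3, g = Sum.inr j) ∧
      E = (D.erase g).map (aProj c) ∧ IsDistKDomMultiset K 2 E}, ?_, ?_, ?_⟩
  · obtain ⟨D, hD⟩ := hne
    obtain ⟨g, hg, hj, hdomE⟩ := DOM D hD
    exact ⟨_, D, hD, g, hg, hj, rfl, hdomE⟩
  · rintro E ⟨D, hD, g, hg, hj, rfl, hdomE⟩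
    obtain ⟨hcard, -⟩ := hmem D hD
    exact ⟨by rw [Multiset.card_map, Multiset.card_erase_of_mem hg, hcard,
      Nat.pred_eq_sub_one], hdomE⟩
  · rintro E ⟨D, hD, g, hg, ⟨j, rfl⟩, rfl, hdomE⟩ t
    obtain ⟨D₁, hD₁, ht, hrel⟩ := hdef D hD (Sum.inl t)
    obtain ⟨g₁, hg₁, ⟨j₁, hj₁⟩, hdomE₁⟩ := DOM D₁ hD₁
    refine ⟨(D₁.erase g₁).map (aProj c), ⟨D₁, hD₁, g₁, hg₁, ⟨j₁, hj₁⟩, rfl, hdomE₁⟩, ?_, ?_⟩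
    · have : Sum.inl t ∈ D₁.erase g₁ :=
        (Multiset.mem_erase_of_ne (by rw [hj₁]; simp)).mpr ht
      simpa using Multiset.mem_map_of_mem (aProj c) this
    · subst hj₁
      refine rel_erase_rewire (fun u w h => withinDist_aProj h) hg hg₁ hrel ?_
      intro u w h1 h2
      exact withinDist_trans (toC h1)
        (withinDist_symm (toC (withinDist_symm h2)))

/-- Lower bound for the `gadget` shape. -/
lemma lower_gadget [DecidableEq α] {K : SimpleGraph α} (hc : K.Connected) {c : α}
    (hleaf : ∀ y y' : α, WithinDist K 2 y c → WithinDist K 2 y' c → WithinDist K 2 y y')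
    {m : ℕ} {F : Set (Multiset (α ⊕ Fin 3))}
    (hF : IsEternalFamily (attach3 K c gadgetPg gadgetAtt) 2 m F) :
    ∃ F', IsEternalFamily K 2 (m - 1) F' := by
  classical
  obtain ⟨hne, hmem, hdef⟩ := hF
  set H := attach3 K c gadgetPg gadgetAtt with hHdef
  -- area vertices : the three pendants and `inl c`; they all project to c
  let isArea : (α ⊕ Fin 3) → Prop := fun x => x = Sum.inl c ∨ ∃ j : Fin 3, x = Sum.inr j
  have hAreaProj : ∀ x, isArea x → aProj c x = c := by
    rintro x (rfl | ⟨j, rfl⟩) <;> simp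
  -- only area guards can cover the far pendant vertex b = inr 2
  have bcov : ∀ x : α ⊕ Fin 3, WithinDist H 2 x (Sum.inr 2) → isArea x := by
    rintro (y | j) h
    · exact Or.inl (by rw [gadget_ball_far hc h])
    · exact Or.inr ⟨j, rfl⟩
  -- a b-cover is never the pendant vertex w = inr 0
  have bcov_ne_w : ∀ x : α ⊕ Fin 3, WithinDist H 2 x (Sum.inr 2) → x ≠ Sum.inr 0 := by
    rintro x h rfl
    exact gadget_w_far_b h
  have hproj : ∀ ⦃u w : α ⊕ Fin 3⦄, WithinDist H 2 u w →
      WithinDist K 2 (aProj c u) (aProj c w) := fun u w h => withinDist_aProj h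
  -- anything within distance 2 of an area vertex projects within distance 2 of c
  have toC : ∀ {u x : α ⊕ Fin 3}, isArea x → WithinDist H 2 u x →
      WithinDist K 2 (aProj c u) c := by
    intro u x hx h
    have := hproj h
    rwa [hAreaProj x hx] at this
  have patch : ∀ {x x' : α ⊕ Fin 3}, isArea x → isArea x' →
      ∀ ⦃u w : α ⊕ Fin 3⦄, WithinDist H 2 u x' → WithinDist H 2 x w →
      WithinDist K 2 (aProj c u) (aProj c w) := by
    intro x x' hx hx' u w h1 h2
    exact hleaf _ _ (toC hx' h1) (toC hx (withinDist_symm h2))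
  -- a deletion of an area guard is valid provided another area guard remains,
  -- or in the degenerate single-area-guard case (by the eternal property)
  have validTwo : ∀ D ∈ F, ∀ g ∈ D, isArea g → (∃ x' ∈ D.erase g, isArea x') →
      IsDistKDomMultiset K 2 ((D.erase g).map (aProj c)) := by
    intro D hD g hg hgarea ⟨x', hx', hx'area⟩
    obtain ⟨hcard, hdom⟩ := hmem D hD
    intro t
    obtain ⟨x, hx, hxw⟩ := hdom (Sum.inl t)
    by_cases hxe : x ∈ D.erase g
    · exact ⟨aProj c x, Multiset.mem_map_of_mem _ hxe, hproj hxw⟩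
    · have hxg : x = g := eq_of_mem_not_mem_erase hx hxe
      subst hxg
      refine ⟨aProj c x', Multiset.mem_map_of_mem _ hx', ?_⟩
      rw [hAreaProj x' hx'area]
      have htc : WithinDist K 2 t c := toC hgarea (withinDist_symm hxw)
      exact withinDist_symm htc
  have DOM : ∀ D ∈ F, ∃ g ∈ D, isArea g ∧
      IsDistKDomMultiset K 2 ((D.erase g).map (aProj c)) := by
    intro D hD
    obtain ⟨hcard, hdom⟩ := hmem D hD
    obtain ⟨g, hg, hgw⟩ := hdom (Sum.inr 2)
    have hgarea : isArea g := bcov g hgw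
    by_cases h2 : ∃ x' ∈ D.erase g, isArea x'
    · exact ⟨g, hg, hgarea, validTwo D hD g hg hgarea h2⟩
    · push_neg at h2
      refine ⟨g, hg, hgarea, ?_⟩
      by_contra hgap
      unfold IsDistKDomMultiset at hgap
      push_neg at hgap
      obtain ⟨t₀, hgap⟩ := hgap
      have gapK : ∀ x ∈ D.erase g, ¬ WithinDist K 2 (aProj c x) t₀ := fun x hx hw =>
        hgap (aProj c x) (Multiset.mem_map_of_mem _ hx) hw
      obtain ⟨x₀, hx₀, hx₀w⟩ := hdom (Sum.inl t₀)
      have hx₀g : x₀ = g := by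
        refine eq_of_mem_not_mem_erase hx₀ (fun hmem' => ?_)
        exact gapK x₀ hmem' (by simpa using hproj hx₀w)
      rw [hx₀g] at hx₀w
      have ht₀c : WithinDist K 2 t₀ c := toC hgarea (withinDist_symm hx₀w)
      by_cases ht₀ : t₀ = c
      · -- attack w = inr 0
        subst ht₀
        obtain ⟨D₂, hD₂, hw₂, hrel⟩ := hdef D hD (Sum.inr 0)
        rw [← Multiset.cons_erase hw₂, Multiset.rel_cons_right] at hrel
        obtain ⟨o, D', ho, hrel', hDeq⟩ := hrel
        have hoD : o ∈ D := hDeq ▸ Multiset.mem_cons_self _ _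
        have hog : o = g := by
          refine eq_of_mem_not_mem_erase hoD (fun hmem' => ?_)
          exact gapK o hmem' (by simpa using hproj ho)
        have hD' : D' = D.erase g := by rw [hDeq, hog, Multiset.erase_cons_head]
        obtain ⟨hcard₂, hdom₂⟩ := hmem D₂ hD₂
        obtain ⟨z, hz, hzw⟩ := hdom₂ (Sum.inr 2)
        have hz' : z ∈ D₂.erase (Sum.inr 0) :=
          (Multiset.mem_erase_of_ne (bcov_ne_w z hzw)).mpr hz
        rw [← Multiset.cons_erase hz', Multiset.rel_cons_right] at hrel'
        obtain ⟨o₂, D'', ho₂, -, hDeq₂⟩ := hrel'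
        have ho₂mem : o₂ ∈ D.erase g := by
          rw [← hD', hDeq₂]; exact Multiset.mem_cons_self _ _
        exact gapK o₂ ho₂mem (toC (bcov z hzw) ho₂)
      · -- attack t₀
        obtain ⟨D₁, hD₁, ht₁, hrel⟩ := hdef D hD (Sum.inl t₀)
        rw [← Multiset.cons_erase ht₁, Multiset.rel_cons_right] at hrel
        obtain ⟨o, D', ho, hrel', hDeq⟩ := hrel
        have hoD : o ∈ D := hDeq ▸ Multiset.mem_cons_self _ _
        have hog : o = g := by
          refine eq_of_mem_not_mem_erase hoD (fun hmem' => ?_)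
          exact gapK o hmem' (by simpa using hproj ho)
        have hD' : D' = D.erase g := by rw [hDeq, hog, Multiset.erase_cons_head]
        obtain ⟨hcard₁, hdom₁⟩ := hmem D₁ hD₁
        obtain ⟨z, hz, hzw⟩ := hdom₁ (Sum.inr 2)
        have hzarea : isArea z := bcov z hzw
        have hzne : z ≠ Sum.inl t₀ := by
          rcases hzarea with rfl | ⟨j, rfl⟩
          · simpa using (fun h => ht₀ h.symm)
          · simp
        have hz' : z ∈ D₁.erase (Sum.inl t₀) := (Multiset.mem_erase_of_ne hzne).mpr hz
        rw [← Multiset.cons_erase hz', Multiset.rel_cons_right] at hrel'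
        obtain ⟨o₂, D'', ho₂, -, hDeq₂⟩ := hrel'
        have ho₂mem : o₂ ∈ D.erase g := by
          rw [← hD', hDeq₂]; exact Multiset.mem_cons_self _ _
        exact gapK o₂ ho₂mem (hleaf _ _ (toC hzarea ho₂) ht₀c)
  -- deletions that keep a guard at `w`, used to answer an attack at `c`
  have DOM' : ∀ D ∈ F, Sum.inr 0 ∈ D → ∃ g ∈ D, isArea g ∧ Sum.inr 0 ∈ D.erase g ∧
      IsDistKDomMultiset K 2 ((D.erase g).map (aProj c)) := by
    intro D hD hw
    obtain ⟨hcard, hdom⟩ := hmem D hD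
    obtain ⟨z, hz, hzw⟩ := hdom (Sum.inr 2)
    have hzarea : isArea z := bcov z hzw
    have hwmem : Sum.inr 0 ∈ D.erase z :=
      (Multiset.mem_erase_of_ne (Ne.symm (bcov_ne_w z hzw))).mpr hw
    refine ⟨z, hz, hzarea, hwmem, validTwo D hD z hz hzarea ⟨Sum.inr 0, hwmem, Or.inr ⟨0, rfl⟩⟩⟩
  -- the resulting family
  refine ⟨{E | ∃ D ∈ F, ∃ g ∈ D, isArea g ∧
      E = (D.erase g).map (aProj c) ∧ IsDistKDomMultiset K 2 E}, ?_, ?_, ?_⟩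
  · obtain ⟨D, hD⟩ := hne
    obtain ⟨g, hg, harea, hdomE⟩ := DOM D hD
    exact ⟨_, D, hD, g, hg, harea, rfl, hdomE⟩
  · rintro E ⟨D, hD, g, hg, harea, rfl, hdomE⟩
    obtain ⟨hcard, -⟩ := hmem D hD
    exact ⟨by rw [Multiset.card_map, Multiset.card_erase_of_mem hg, hcard,
      Nat.pred_eq_sub_one], hdomE⟩
  · rintro E ⟨D, hD, g, hg, harea, rfl, hdomE⟩ t
    by_cases htc : t = c
    · -- attack c : simulate an attack at w
      obtain ⟨D₂, hD₂, hw₂, hrel⟩ := hdef D hD (Sum.inr 0)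
      obtain ⟨g₂, hg₂, hg₂area, hwmem, hdomE₂⟩ := DOM' D₂ hD₂ hw₂
      refine ⟨(D₂.erase g₂).map (aProj c), ⟨D₂, hD₂, g₂, hg₂, hg₂area, rfl, hdomE₂⟩, ?_, ?_⟩
      · rw [htc]
        have := Multiset.mem_map_of_mem (aProj c) hwmem
        simpa using this
      · exact rel_erase_rewire (fun u w h => withinDist_aProj h) hg hg₂ hrel
          (patch harea hg₂area)
    · -- attack t ≠ c
      obtain ⟨D₁, hD₁, ht, hrel⟩ := hdef D hD (Sum.inl t)
      obtain ⟨g₁, hg₁, hg₁area, hdomE₁⟩ := DOM D₁ hD₁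
      refine ⟨(D₁.erase g₁).map (aProj c), ⟨D₁, hD₁, g₁, hg₁, hg₁area, rfl, hdomE₁⟩, ?_, ?_⟩
      · have hne' : Sum.inl t ≠ g₁ := by
          rcases hg₁area with rfl | ⟨j, rfl⟩
          · simpa using htc
          · simp
        have : Sum.inl t ∈ D₁.erase g₁ := (Multiset.mem_erase_of_ne hne').mpr ht
        simpa using Multiset.mem_map_of_mem (aProj c) this
      · exact rel_erase_rewire (fun u w h => withinDist_aProj h) hg hg₁ hrel
          (patch harea hg₁area)

end LowerBounds
section Plumbing

variable {α : Type*} {β : Type*}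

lemma induce_adj' {G : SimpleGraph α} {S : Set α} {x y : ↥S} :
    (G.induce S).Adj x y ↔ G.Adj x.1 y.1 := Iff.rfl

/-- transporting vertex-deleted subgraphs along isomorphisms -/
def isoInduceNe {G : SimpleGraph α} {H : SimpleGraph β} (e : G ≃g H) (x : α) :
    (G.induce {y | y ≠ x}) ≃g (H.induce {y | y ≠ e x}) where
  toEquiv := Equiv.subtypeEquiv e.toEquiv (fun y => by
    simp only [Set.mem_setOf_eq]
    exact not_congr (Equiv.apply_eq_iff_eq e.toEquiv).symm)
  map_rel_iff' := by
    intro a b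
    rw [induce_adj', induce_adj']
    exact e.map_adj_iff

lemma not_connected_of_isolated {G : SimpleGraph α} {x z₀ : α} (hz : z₀ ≠ x)
    (hx : ∀ z, ¬ G.Adj x z) : ¬ G.Connected := by
  intro h
  obtain ⟨p⟩ := h.preconnected x z₀
  cases p with
  | nil => exact hz rfl
  | cons h' p => exact hx _ h'

/-- if the leaf `c` has all its neighbours equal to `u`, balls of радиус of radius 2
around `c` have pairwise distance at most 2 -/
lemma leaf_ball {K : SimpleGraph α} {c u : α} (hadj : ∀ z, K.Adj c z → z = u) :
    ∀ y y' : α, WithinDist K 2 y c → WithinDist K 2 y' c → WithinDist K 2 y y' := by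
  have key : ∀ y, WithinDist K 2 y c → y = c ∨ WithinDist K 1 u y := by
    intro y h
    obtain ⟨p, hp⟩ := h.1.symm.exists_walk_length_eq_dist
    have hlen : p.length ≤ 2 := by
      rw [hp, SimpleGraph.dist_comm]; exact h.2
    cases p with
    | nil => exact Or.inl rfl
    | @cons _ z _ h' q =>
      have hz : z = u := hadj z h'
      subst hz
      right
      refine ⟨⟨q⟩, le_trans (SimpleGraph.dist_le q) ?_⟩
      rw [SimpleGraph.Walk.length_cons] at hlen
      omega
  intro y y' h h'
  rcases key y h with rfl | h1
  · exact withinDist_symm h'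
  · rcases key y' h' with rfl | h2
    · exact h
    · exact withinDist_trans (withinDist_symm h1) h2

lemma connected_attach3_iff {K : SimpleGraph α} {c : α} {Pg : SimpleGraph (Fin 3)}
    {att : Set (Fin 3)}
    (hreach : ∀ i : Fin 3, (attach3 K c Pg att).Reachable (Sum.inr i) (Sum.inl c)) :
    (attach3 K c Pg att).Connected ↔ K.Connected := by
  constructor
  · intro h
    haveI : Nonempty α := ⟨c⟩
    constructor
    intro y y'
    obtain ⟨p⟩ := h.preconnected (Sum.inl y) (Sum.inl y')
    obtain ⟨q, -⟩ := isLip_aProj.exists_walk p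
    exact ⟨q⟩
  · intro h
    have hbase : ∀ y, (attach3 K c Pg att).Reachable (Sum.inl y) (Sum.inl c) := by
      intro y
      obtain ⟨p⟩ := h.preconnected y c
      obtain ⟨q, -⟩ := isLip_inl (c := c) (Pg := Pg) (att := att).exists_walk p
      exact ⟨q⟩
    constructor
    rintro (y | i) (y' | i')
    · exact (hbase y).trans (hbase y').symm
    · exact (hbase y).trans (hreach i').symm
    · exact (hreach i).trans (hbase y').symm
    · exact (hreach i).trans (hreach i').symm

lemma reach_gadget {K : SimpleGraph α} {c : α} (i : Fin 3) :
    (attach3 K c gadgetPg gadgetAtt).Reachable (Sum.inr i) (Sum.inl c) := by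
  have h0 : (attach3 K c gadgetPg gadgetAtt).Adj (Sum.inr 0) (Sum.inl c) := by
    rw [attach3_adj_inr_inl]; exact ⟨rfl, by simp [gadgetAtt]⟩
  have h1 : (attach3 K c gadgetPg gadgetAtt).Adj (Sum.inr 1) (Sum.inl c) := by
    rw [attach3_adj_inr_inl]; exact ⟨rfl, by simp [gadgetAtt]⟩
  have h21 : (attach3 K c gadgetPg gadgetAtt).Adj (Sum.inr 2) (Sum.inr 1) := by
    rw [attach3_adj_inr_inr, gadgetPg_adj]; tauto
  fin_cases i
  · exact h0.reachable
  · exact h1.reachable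
  · exact h21.reachable.trans h1.reachable

lemma reach_p3 {K : SimpleGraph α} {c : α} (i : Fin 3) :
    (attach3 K c p3Pg p3Att).Reachable (Sum.inr i) (Sum.inl c) := by
  have h0 : (attach3 K c p3Pg p3Att).Adj (Sum.inr 0) (Sum.inl c) := by
    rw [attach3_adj_inr_inl]; exact ⟨rfl, by simp [p3Att]⟩
  have h10 : (attach3 K c p3Pg p3Att).Adj (Sum.inr 1) (Sum.inr 0) := by
    rw [attach3_adj_inr_inr, p3Pg_adj]; tauto
  have h21 : (attach3 K c p3Pg p3Att).Adj (Sum.inr 2) (Sum.inr 1) := by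
    rw [attach3_adj_inr_inr, p3Pg_adj]; tauto
  fin_cases i
  · exact h0.reachable
  · exact h10.reachable.trans h0.reachable
  · exact (h21.reachable.trans h10.reachable).trans h0.reachable

lemma reach_spider {K : SimpleGraph α} {c : α} (i : Fin 3) :
    (attach3 K c spiderPg spiderAtt).Reachable (Sum.inr i) (Sum.inl c) := by
  have h0 : (attach3 K c spiderPg spiderAtt).Adj (Sum.inr 0) (Sum.inl c) := by
    rw [attach3_adj_inr_inl]; exact ⟨rfl, by simp [spiderAtt]⟩
  have h10 : (attach3 K c spiderPg spiderAtt).Adj (Sum.inr 1) (Sum.inr 0) := by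
    rw [attach3_adj_inr_inr, spiderPg_adj]; tauto
  have h20 : (attach3 K c spiderPg spiderAtt).Adj (Sum.inr 2) (Sum.inr 0) := by
    rw [attach3_adj_inr_inr, spiderPg_adj]; tauto
  fin_cases i
  · exact h0.reachable
  · exact h10.reachable.trans h0.reachable
  · exact h20.reachable.trans h0.reachable

/-- removing a base vertex `t ≠ c` commutes with `attach3` -/
def isoAttach3DelBase {K : SimpleGraph α} {c t : α} (hct : c ≠ t)
    {Pg : SimpleGraph (Fin 3)} {att : Set (Fin 3)} :
    ((attach3 K c Pg att).induce {z | z ≠ Sum.inl t}) ≃g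
      (attach3 (K.induce {y | y ≠ t}) ⟨c, hct⟩ Pg att) where
  toEquiv :=
  { toFun := fun z => match z with
      | ⟨Sum.inl y, h⟩ => Sum.inl ⟨y, fun hy => h (by rw [hy])⟩
      | ⟨Sum.inr j, _⟩ => Sum.inr j
    invFun := fun z => match z with
      | Sum.inl ⟨y, h⟩ => ⟨Sum.inl y, fun hy => h (Sum.inl_injective hy)⟩
      | Sum.inr j => ⟨Sum.inr j, by simp⟩
    left_inv := by rintro ⟨(y | j), h⟩ <;> rfl
    right_inv := by rintro (⟨y, h⟩ | j) <;> rfl }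
  map_rel_iff' := by
    rintro ⟨(y | j), h⟩ ⟨(y' | j'), h'⟩
    · show (attach3 _ _ _ _).Adj (Sum.inl _) (Sum.inl _) ↔ _
      rw [attach3_adj_inl_inl, induce_adj', induce_adj', attach3_adj_inl_inl]
    · show (attach3 _ _ _ _).Adj (Sum.inl _) (Sum.inr _) ↔ _
      rw [attach3_adj_inl_inr, induce_adj', attach3_adj_inl_inr]
      simp [Subtype.ext_iff]
    · show (attach3 _ _ _ _).Adj (Sum.inr _) (Sum.inl _) ↔ _
      rw [attach3_adj_inr_inl, induce_adj', attach3_adj_inr_inl]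
      simp [Subtype.ext_iff]
    · show (attach3 _ _ _ _).Adj (Sum.inr _) (Sum.inr _) ↔ _
      rw [attach3_adj_inr_inr, induce_adj', attach3_adj_inr_inr]

end Plumbing
section EternalEqualities

variable {α : Type*}

lemma eternal_gadget [Fintype α] [DecidableEq α] {K : SimpleGraph α} {c : α}
    (hc : K.Connected)
    (hleaf : ∀ y y' : α, WithinDist K 2 y c → WithinDist K 2 y' c → WithinDist K 2 y y') :
    eternalNum (attach3 K c gadgetPg gadgetAtt) 2 = eternalNum K 2 + 1 := by
  apply le_antisymm
  · obtain ⟨F, hF⟩ := exists_eternalFamily K 2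
    obtain ⟨F', hF'⟩ := upper_gadget (c := c) hF
    exact eternalNum_le hF'
  · obtain ⟨F, hF⟩ := exists_eternalFamily (attach3 K c gadgetPg gadgetAtt) 2
    obtain ⟨F', hF'⟩ := lower_gadget hc hleaf hF
    have h1 := eternalNum_le hF'
    haveI : Nonempty (α ⊕ Fin 3) := ⟨Sum.inr 0⟩
    have h2 : 0 < eternalNum (attach3 K c gadgetPg gadgetAtt) 2 := eternalNum_pos _ _
    omega

lemma eternal_p3 [Fintype α] [DecidableEq α] {K : SimpleGraph α} {c : α}
    (hc : K.Connected) :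
    eternalNum (attach3 K c p3Pg p3Att) 2 = eternalNum K 2 + 1 := by
  apply le_antisymm
  · obtain ⟨F, hF⟩ := exists_eternalFamily K 2
    obtain ⟨F', hF'⟩ := upper_simple (pendant_pairs_p3 (c := c)) hF
    exact eternalNum_le hF'
  · obtain ⟨F, hF⟩ := exists_eternalFamily (attach3 K c p3Pg p3Att) 2
    obtain ⟨F', hF'⟩ := lower_p3 hc hF
    have h1 := eternalNum_le hF'
    haveI : Nonempty (α ⊕ Fin 3) := ⟨Sum.inr 0⟩
    have h2 : 0 < eternalNum (attach3 K c p3Pg p3Att) 2 := eternalNum_pos _ _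
    omega

lemma eternal_spider_le [Fintype α] {K : SimpleGraph α} {c : α} :
    eternalNum (attach3 K c spiderPg spiderAtt) 2 ≤ eternalNum K 2 + 1 := by
  obtain ⟨F, hF⟩ := exists_eternalFamily K 2
  obtain ⟨F', hF'⟩ := upper_simple (pendant_pairs_spider (c := c)) hF
  exact eternalNum_le hF'

end EternalEqualities

section AttachPathAdj

variable {α : Type*}

lemma attachPath_adj {G : SimpleGraph α} {y : α} {n : ℕ} {x₁ x₂ : α ⊕ Fin n} :
    (attachPath G y n).Adj x₁ x₂ ↔
      ((∃ a b, G.Adj a b ∧ Sum.inl a = x₁ ∧ Sum.inl b = x₂) ∨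
       (∃ i j, (pathGraph n).Adj i j ∧ Sum.inr i = x₁ ∧ Sum.inr j = x₂)) ∨
      (∃ h : 0 < n, (x₁ = Sum.inl y ∧ x₂ = Sum.inr ⟨0, h⟩) ∨
        (x₂ = Sum.inl y ∧ x₁ = Sum.inr ⟨0, h⟩)) := by
  unfold attachPath
  have e1 := SimpleGraph.map_adj ⟨Sum.inl, Sum.inl_injective⟩ G x₁ x₂
  have e2 := SimpleGraph.map_adj ⟨(Sum.inr : Fin n → α ⊕ Fin n), Sum.inr_injective⟩
    (pathGraph n) x₁ x₂
  simp only [Function.Embedding.coeFn_mk] at e1 e2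
  rw [SimpleGraph.sup_adj, SimpleGraph.sup_adj, e1, e2,
    SimpleGraph.fromEdgeSet_adj]
  constructor
  · rintro ((h | h) | ⟨hm, hne⟩)
    · exact Or.inl (Or.inl h)
    · exact Or.inl (Or.inr h)
    · obtain ⟨hn, he⟩ := hm
      rw [Sym2.eq_iff] at he
      rcases he with ⟨h1, h2⟩ | ⟨h1, h2⟩
      · exact Or.inr ⟨hn, Or.inl ⟨h1, h2⟩⟩
      · exact Or.inr ⟨hn, Or.inr ⟨h2, h1⟩⟩
  · rintro ((h | h) | ⟨hn, (⟨h1, h2⟩ | ⟨h1, h2⟩)⟩)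
    · exact Or.inl (Or.inl h)
    · exact Or.inl (Or.inr h)
    · subst h1; subst h2
      exact Or.inr ⟨⟨hn, rfl⟩, by simp⟩
    · subst h1; subst h2
      refine Or.inr ⟨⟨hn, Sym2.eq_swap⟩, by simp⟩

lemma attachPath_adj_inl_inl {G : SimpleGraph α} {y : α} {n : ℕ} {a b : α} :
    (attachPath G y n).Adj (Sum.inl a) (Sum.inl b) ↔ G.Adj a b := by
  rw [attachPath_adj]
  constructor
  · rintro ((⟨a', b', h, h1, h2⟩ | ⟨i, j, h, h1, h2⟩) | ⟨hn, (⟨h1, h2⟩ | ⟨h1, h2⟩)⟩)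
    · rw [← Sum.inl_injective h1, ← Sum.inl_injective h2]; exact h
    · exact absurd h1 (by simp)
    · exact absurd h2 (by simp)
    · exact absurd h2 (by simp)
  · intro h
    exact Or.inl (Or.inl ⟨a, b, h, rfl, rfl⟩)

lemma attachPath_adj_inl_inr {G : SimpleGraph α} {y : α} {n : ℕ} {a : α} {i : Fin n} :
    (attachPath G y n).Adj (Sum.inl a) (Sum.inr i) ↔ (a = y ∧ (i : ℕ) = 0) := by
  rw [attachPath_adj]
  constructor
  · rintro ((⟨a', b', h, h1, h2⟩ | ⟨i', j', h, h1, h2⟩) | ⟨hn, (⟨h1, h2⟩ | ⟨h1, h2⟩)⟩)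
    · exact absurd h2 (by simp)
    · exact absurd h1 (by simp)
    · refine ⟨Sum.inl_injective h1, ?_⟩
      have := Sum.inr_injective h2
      rw [this]
    · exact absurd h1 (by simp)
  · rintro ⟨rfl, hi⟩
    have hn : 0 < n := i.pos
    refine Or.inr ⟨hn, Or.inl ⟨rfl, ?_⟩⟩
    congr 1
    exact Fin.ext hi
lemma attachPath_adj_inr_inl {G : SimpleGraph α} {y : α} {n : ℕ} {a : α} {i : Fin n} :
    (attachPath G y n).Adj (Sum.inr i) (Sum.inl a) ↔ (a = y ∧ (i : ℕ) = 0) := by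
  rw [(attachPath G y n).adj_comm, attachPath_adj_inl_inr]

lemma attachPath_adj_inr_inr {G : SimpleGraph α} {y : α} {n : ℕ} {i j : Fin n} :
    (attachPath G y n).Adj (Sum.inr i) (Sum.inr j) ↔ (pathGraph n).Adj i j := by
  rw [attachPath_adj]
  constructor
  · rintro ((⟨a', b', h, h1, h2⟩ | ⟨i', j', h, h1, h2⟩) | ⟨hn, (⟨h1, h2⟩ | ⟨h1, h2⟩)⟩)
    · exact absurd h1 (by simp)
    · rw [← Sum.inr_injective h1, ← Sum.inr_injective h2]; exact h
    · exact absurd h1 (by simp)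
    · exact absurd h1 (by simp)
  · intro h
    exact Or.inl (Or.inr ⟨i, j, h, rfl, rfl⟩)

end AttachPathAdj
section MainIsos

variable {α : Type*}

/-- the graph `T'` of the theorem is isomorphic to `attach3 G v gadgetPg gadgetAtt`,
with pendant labels `0 = w`, `1 = a`, `2 = b`. -/
def isoMain (G : SimpleGraph α) (v : α) :
    (attachPath (attachPath G v 2) (Sum.inl v) 1) ≃g attach3 G v gadgetPg gadgetAtt where
  toEquiv :=
  { toFun := fun z => match z with
      | Sum.inl (Sum.inl t) => Sum.inl t
      | Sum.inl (Sum.inr i) => Sum.inr (if i = 0 then 1 else 2)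
      | Sum.inr _ => Sum.inr 0
    invFun := fun z => match z with
      | Sum.inl t => Sum.inl (Sum.inl t)
      | Sum.inr j =>
          if j = 0 then Sum.inr 0
          else if j = 1 then Sum.inl (Sum.inr 0) else Sum.inl (Sum.inr 1)
    left_inv := by
      rintro ((t | i) | i0)
      · rfl
      · fin_cases i <;> simp
      · simp [Subsingleton.elim (0 : Fin 1) i0]
    right_inv := by
      rintro (t | j)
      · rfl
      · fin_cases j <;> simp }
  map_rel_iff' := by
    rintro ((t | i) | i0) ((t' | i') | i0')
    · show (attach3 G v gadgetPg gadgetAtt).Adj (Sum.inl t) (Sum.inl t') ↔ _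
      rw [attach3_adj_inl_inl, attachPath_adj_inl_inl, attachPath_adj_inl_inl]
    · show (attach3 G v gadgetPg gadgetAtt).Adj (Sum.inl t) (Sum.inr _) ↔ _
      rw [attach3_adj_inl_inr, attachPath_adj_inl_inl, attachPath_adj_inl_inr]
      fin_cases i' <;> simp [gadgetAtt]
    · show (attach3 G v gadgetPg gadgetAtt).Adj (Sum.inl t) (Sum.inr 0) ↔ _
      rw [attach3_adj_inl_inr, attachPath_adj_inl_inr]
      simp [gadgetAtt]
    · show (attach3 G v gadgetPg gadgetAtt).Adj (Sum.inr _) (Sum.inl t') ↔ _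
      rw [attach3_adj_inr_inl, attachPath_adj_inl_inl, attachPath_adj_inr_inl]
      fin_cases i <;> simp [gadgetAtt]
    · show (attach3 G v gadgetPg gadgetAtt).Adj (Sum.inr _) (Sum.inr _) ↔ _
      rw [attach3_adj_inr_inr, attachPath_adj_inl_inl, attachPath_adj_inr_inr]
      fin_cases i <;> fin_cases i' <;>
        simp [gadgetPg_adj, SimpleGraph.pathGraph_adj]
    · show (attach3 G v gadgetPg gadgetAtt).Adj (Sum.inr _) (Sum.inr 0) ↔ _
      rw [attach3_adj_inr_inr, attachPath_adj_inl_inr]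
      fin_cases i <;> simp [gadgetPg_adj]
    · show (attach3 G v gadgetPg gadgetAtt).Adj (Sum.inr 0) (Sum.inl t') ↔ _
      rw [attach3_adj_inr_inl, attachPath_adj_inr_inl]
      simp [gadgetAtt]
    · show (attach3 G v gadgetPg gadgetAtt).Adj (Sum.inr 0) (Sum.inr _) ↔ _
      rw [attach3_adj_inr_inr, attachPath_adj_inr_inl]
      fin_cases i' <;> simp [gadgetPg_adj]
    · show (attach3 G v gadgetPg gadgetAtt).Adj (Sum.inr 0) (Sum.inr 0) ↔ _
      rw [attach3_adj_inr_inr, attachPath_adj_inr_inr]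
      simp [gadgetPg_adj, SimpleGraph.pathGraph_adj]

/-- deleting the pendant leaf `w` from the gadget: what remains is a pendant `P₃`
attached to the neighbour `u` of the leaf `c`. -/
def isoDelW [DecidableEq α] {K : SimpleGraph α} {c u : α} (huc : K.Adj c u)
    (hadj : ∀ z, K.Adj c z → z = u) :
    ((attach3 K c gadgetPg gadgetAtt).induce {z | z ≠ Sum.inr 0}) ≃g
      attach3 (K.induce {y | y ≠ c}) ⟨u, fun h => K.loopless.irrefl c (h ▸ huc)⟩ p3Pg p3Att where
  toEquiv :=
  { toFun := fun z => match z with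
      | ⟨Sum.inl y, _⟩ =>
          if h : y = c then Sum.inr 0 else Sum.inl ⟨y, h⟩
      | ⟨Sum.inr j, _⟩ => Sum.inr j
    invFun := fun z => match z with
      | Sum.inl ⟨y, _⟩ => ⟨Sum.inl y, by simp⟩
      | Sum.inr j => if hj : j = 0 then ⟨Sum.inl c, by simp⟩ else ⟨Sum.inr j, by simpa using hj⟩
    left_inv := by
      rintro ⟨(y | j), hz⟩
      · by_cases h : y = c
        · simp [h]
        · simp [h]
      · have hj : j ≠ 0 := fun hj => hz (by rw [hj])
        simp [hj]
    right_inv := by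
      rintro (⟨y, hy⟩ | j)
      · simp only [Set.mem_setOf_eq] at hy
        simp [hy]
      · by_cases hj : j = 0
        · simp [hj]
        · simp [hj] }
  map_rel_iff' := by
    rintro ⟨(y | j), hz⟩ ⟨(y' | j'), hz'⟩
    · show _ ↔ (attach3 K c gadgetPg gadgetAtt).Adj (Sum.inl y) (Sum.inl y')
      simp only [Equiv.coe_fn_mk]
      rw [attach3_adj_inl_inl]
      by_cases h : y = c <;> by_cases h' : y' = c
      · rw [dif_pos h, dif_pos h', attach3_adj_inr_inr]
        constructor
        · intro hh; simp [p3Pg_adj] at hh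
        · intro hh; rw [h, h'] at hh; exact absurd hh (K.loopless.irrefl c)
      · rw [dif_pos h, dif_neg h', attach3_adj_inr_inl]
        constructor
        · rintro ⟨h1, -⟩
          have h2 : y' = u := Subtype.ext_iff.mp h1
          rw [h, h2]; exact huc
        · intro hh
          exact ⟨Subtype.ext (hadj y' (h ▸ hh)), by simp [p3Att]⟩
      · rw [dif_neg h, dif_pos h', attach3_adj_inl_inr]
        constructor
        · rintro ⟨h1, -⟩
          have h2 : y = u := Subtype.ext_iff.mp h1
          rw [h', h2]; exact huc.symm
        · intro hh
          exact ⟨Subtype.ext (hadj y (h' ▸ hh.symm)), by simp [p3Att]⟩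
      · rw [dif_neg h, dif_neg h', attach3_adj_inl_inl, induce_adj']
    · show _ ↔ (attach3 K c gadgetPg gadgetAtt).Adj (Sum.inl y) (Sum.inr j')
      simp only [Equiv.coe_fn_mk]
      rw [attach3_adj_inl_inr]
      have hj' : j' ≠ 0 := fun hh => hz' (by rw [hh])
      by_cases h : y = c
      · rw [dif_pos h, attach3_adj_inr_inr]
        fin_cases j'
        · exact absurd rfl hj'
        · simp [p3Pg_adj, gadgetAtt, h]
        · simp [p3Pg_adj, gadgetAtt]
      · rw [dif_neg h, attach3_adj_inl_inr]
        simp [p3Att, hj', h, Subtype.ext_iff]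
    · show _ ↔ (attach3 K c gadgetPg gadgetAtt).Adj (Sum.inr j) (Sum.inl y')
      simp only [Equiv.coe_fn_mk]
      rw [attach3_adj_inr_inl]
      have hj : j ≠ 0 := fun hh => hz (by rw [hh])
      by_cases h' : y' = c
      · rw [dif_pos h', attach3_adj_inr_inr]
        fin_cases j
        · exact absurd rfl hj
        · simp [p3Pg_adj, gadgetAtt, h']
        · simp [p3Pg_adj, gadgetAtt]
      · rw [dif_neg h', attach3_adj_inr_inl]
        simp [p3Att, hj, h', Subtype.ext_iff]
    · show _ ↔ (attach3 K c gadgetPg gadgetAtt).Adj (Sum.inr j) (Sum.inr j')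
      simp only [Equiv.coe_fn_mk]
      rw [attach3_adj_inr_inr, attach3_adj_inr_inr]
      have hj : j ≠ 0 := fun hh => hz (by rw [hh])
      have hj' : j' ≠ 0 := fun hh => hz' (by rw [hh])
      fin_cases j <;> fin_cases j'
      · exact absurd rfl hj
      · exact absurd rfl hj
      · exact absurd rfl hj
      · exact absurd rfl hj'
      · simp [p3Pg_adj, gadgetPg_adj]
      · simp [p3Pg_adj, gadgetPg_adj]
      · exact absurd rfl hj'
      · simp [p3Pg_adj, gadgetPg_adj]
      · simp [p3Pg_adj, gadgetPg_adj]

/-- deleting the far pendant vertex `b` from the gadget: what remains is a pendant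
spider `{v; w, a}` attached to the neighbour `u` of the leaf `c`. -/
def isoDelB [DecidableEq α] {K : SimpleGraph α} {c u : α} (huc : K.Adj c u)
    (hadj : ∀ z, K.Adj c z → z = u) :
    ((attach3 K c gadgetPg gadgetAtt).induce {z | z ≠ Sum.inr 2}) ≃g
      attach3 (K.induce {y | y ≠ c}) ⟨u, fun h => K.loopless.irrefl c (h ▸ huc)⟩ spiderPg spiderAtt where
  toEquiv :=
  { toFun := fun z => match z with
      | ⟨Sum.inl y, _⟩ =>
          if h : y = c then Sum.inr 0 else Sum.inl ⟨y, h⟩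
      | ⟨Sum.inr j, _⟩ => Sum.inr (if j = 0 then 1 else 2)
    invFun := fun z => match z with
      | Sum.inl ⟨y, _⟩ => ⟨Sum.inl y, by simp⟩
      | Sum.inr j =>
          if j = 0 then ⟨Sum.inl c, by simp⟩
          else if j = 1 then ⟨Sum.inr 0, by simp⟩ else ⟨Sum.inr 1, by simp⟩
    left_inv := by
      rintro ⟨(y | j), hz⟩
      · by_cases h : y = c
        · simp [h]
        · simp [h]
      · have hj : j ≠ 2 := fun hj => hz (by rw [hj])
        fin_cases j
        · simp
        · simp
        · exact absurd rfl hj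
    right_inv := by
      rintro (⟨y, hy⟩ | j)
      · simp only [Set.mem_setOf_eq] at hy
        simp [hy]
      · fin_cases j <;> simp }
  map_rel_iff' := by
    rintro ⟨(y | j), hz⟩ ⟨(y' | j'), hz'⟩
    · show _ ↔ (attach3 K c gadgetPg gadgetAtt).Adj (Sum.inl y) (Sum.inl y')
      simp only [Equiv.coe_fn_mk]
      rw [attach3_adj_inl_inl]
      by_cases h : y = c <;> by_cases h' : y' = c
      · rw [dif_pos h, dif_pos h', attach3_adj_inr_inr]
        constructor
        · intro hh; simp [spiderPg_adj] at hh
        · intro hh; rw [h, h'] at hh; exact absurd hh (K.loopless.irrefl c)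
      · rw [dif_pos h, dif_neg h', attach3_adj_inr_inl]
        constructor
        · rintro ⟨h1, -⟩
          have h2 : y' = u := Subtype.ext_iff.mp h1
          rw [h, h2]; exact huc
        · intro hh
          exact ⟨Subtype.ext (hadj y' (h ▸ hh)), by simp [spiderAtt]⟩
      · rw [dif_neg h, dif_pos h', attach3_adj_inl_inr]
        constructor
        · rintro ⟨h1, -⟩
          have h2 : y = u := Subtype.ext_iff.mp h1
          rw [h', h2]; exact huc.symm
        · intro hh
          exact ⟨Subtype.ext (hadj y (h' ▸ hh.symm)), by simp [spiderAtt]⟩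
      · rw [dif_neg h, dif_neg h', attach3_adj_inl_inl, induce_adj']
    · show _ ↔ (attach3 K c gadgetPg gadgetAtt).Adj (Sum.inl y) (Sum.inr j')
      simp only [Equiv.coe_fn_mk]
      rw [attach3_adj_inl_inr]
      have hj' : j' ≠ 2 := fun hh => hz' (by rw [hh])
      by_cases h : y = c
      · rw [dif_pos h, attach3_adj_inr_inr]
        fin_cases j'
        · simp [spiderPg_adj, gadgetAtt, h]
        · simp [spiderPg_adj, gadgetAtt, h]
        · exact absurd rfl hj'
      · rw [dif_neg h, attach3_adj_inl_inr]
        fin_cases j' <;> simp [spiderAtt, h, Subtype.ext_iff]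
    · show _ ↔ (attach3 K c gadgetPg gadgetAtt).Adj (Sum.inr j) (Sum.inl y')
      simp only [Equiv.coe_fn_mk]
      rw [attach3_adj_inr_inl]
      have hj : j ≠ 2 := fun hh => hz (by rw [hh])
      by_cases h' : y' = c
      · rw [dif_pos h', attach3_adj_inr_inr]
        fin_cases j
        · simp [spiderPg_adj, gadgetAtt, h']
        · simp [spiderPg_adj, gadgetAtt, h']
        · exact absurd rfl hj
      · rw [dif_neg h', attach3_adj_inr_inl]
        fin_cases j <;> simp [spiderAtt, h', Subtype.ext_iff]
    · show _ ↔ (attach3 K c gadgetPg gadgetAtt).Adj (Sum.inr j) (Sum.inr j')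
      simp only [Equiv.coe_fn_mk]
      rw [attach3_adj_inr_inr]
      have hj : j ≠ 2 := fun hh => hz (by rw [hh])
      have hj' : j' ≠ 2 := fun hh => hz' (by rw [hh])
      fin_cases j <;> fin_cases j'
      · simp [spiderPg_adj, gadgetPg_adj]
      · simp [spiderPg_adj, gadgetPg_adj]
      · exact absurd rfl hj'
      · simp [spiderPg_adj, gadgetPg_adj]
      · simp [spiderPg_adj, gadgetPg_adj]
      · exact absurd rfl hj'
      · exact absurd rfl hj
      · exact absurd rfl hj
      · exact absurd rfl hj

end MainIsos
section Final

variable {α : Type*} {β : Type*}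

/-- variant of `isoInduceNe` with the image vertex given explicitly -/
def isoInduceNe' {G : SimpleGraph α} {H : SimpleGraph β} (e : G ≃g H) (x : α) (x' : β)
    (h : e x = x') : (G.induce {y | y ≠ x}) ≃g (H.induce {y | y ≠ x'}) :=
  h ▸ isoInduceNe e x

end Final

/-- appending a path on two vertices and a single extra leaf to a leaf
preserves (in both directions) eternal distance-2 domination criticality. -/
theorem critical_extension_P4 {V : Type u} [Fintype V] (G : SimpleGraph V) (hG : G.IsTree)
    (v : V) (hv : IsLeafV G v) :
    EternalCritical (attachPath (attachPath G v 2) (Sum.inl v) 1) ↔ EternalCritical G := by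
  classical
  obtain ⟨u, hu, huniq⟩ := hv
  have hGc : G.Connected := hG.isConnected
  set T' := attachPath (attachPath G v 2) (Sum.inl v) 1 with hT'def
  have hleafG : ∀ y y' : V, WithinDist G 2 y v → WithinDist G 2 y' v → WithinDist G 2 y y' :=
    leaf_ball huniq
  have hΓT' : eternalNum T' 2 = eternalNum G 2 + 1 := by
    rw [eternalNum_congr (isoMain G v) 2]
    exact eternal_gadget hGc hleafG
  -- the three distinguished vertices of T'
  have hvu : v ≠ u := fun h => G.loopless.irrefl v (h ▸ hu)
  -- the iso for deleting w
  have isoW : (T'.induce {z | z ≠ Sum.inr 0}) ≃g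
      attach3 (G.induce {y | y ≠ v}) ⟨u, fun h => G.loopless.irrefl v (h ▸ hu)⟩ p3Pg p3Att :=
    (isoInduceNe' (isoMain G v) (Sum.inr 0) (Sum.inr 0) rfl).trans (isoDelW hu huniq)
  -- the iso for deleting b
  have isoB : (T'.induce {z | z ≠ Sum.inl (Sum.inr 1)}) ≃g
      attach3 (G.induce {y | y ≠ v}) ⟨u, fun h => G.loopless.irrefl v (h ▸ hu)⟩ spiderPg spiderAtt :=
    (isoInduceNe' (isoMain G v) (Sum.inl (Sum.inr 1)) (Sum.inr 2) rfl).trans (isoDelB hu huniq)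
  -- the iso for deleting a base vertex t ≠ v
  have isoT : ∀ (t : V) (hvt : v ≠ t), (T'.induce {z | z ≠ Sum.inl (Sum.inl t)}) ≃g
      attach3 (G.induce {y | y ≠ t}) ⟨v, hvt⟩ gadgetPg gadgetAtt :=
    fun t hvt => (isoInduceNe' (isoMain G v) (Sum.inl (Sum.inl t)) (Sum.inl t) rfl).trans
      (isoAttach3DelBase hvt)
  -- connectivity transfer for w-deletion
  have connW : (T'.induce {z | z ≠ Sum.inr 0}).Connected ↔
      (G.induce {y | y ≠ v}).Connected := by
    rw [connected_congr isoW]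
    exact connected_attach3_iff (fun i => reach_p3 i)
  have connB : (T'.induce {z | z ≠ Sum.inl (Sum.inr 1)}).Connected ↔
      (G.induce {y | y ≠ v}).Connected := by
    rw [connected_congr isoB]
    exact connected_attach3_iff (fun i => reach_spider i)
  have connT : ∀ (t : V) (hvt : v ≠ t), (T'.induce {z | z ≠ Sum.inl (Sum.inl t)}).Connected ↔
      (G.induce {y | y ≠ t}).Connected := by
    intro t hvt
    rw [connected_congr (isoT t hvt)]
    exact connected_attach3_iff (fun i => reach_gadget i)
  -- eternal numbers of the deleted graphs
  have hΓW : (G.induce {y | y ≠ v}).Connected →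
      eternalNum (T'.induce {z | z ≠ Sum.inr 0}) 2 =
        eternalNum (G.induce {y | y ≠ v}) 2 + 1 := by
    intro hconn
    rw [eternalNum_congr isoW 2]
    exact eternal_p3 hconn
  have hΓB : eternalNum (T'.induce {z | z ≠ Sum.inl (Sum.inr 1)}) 2 ≤
      eternalNum (G.induce {y | y ≠ v}) 2 + 1 := by
    rw [eternalNum_congr isoB 2]
    exact eternal_spider_le
  have hΓT : ∀ (t : V) (hvt : v ≠ t), (G.induce {y | y ≠ t}).Connected →
      eternalNum (T'.induce {z | z ≠ Sum.inl (Sum.inl t)}) 2 =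
        eternalNum (G.induce {y | y ≠ t}) 2 + 1 := by
    intro t hvt hconn
    rw [eternalNum_congr (isoT t hvt) 2]
    refine eternal_gadget hconn ?_
    -- the leaf property of v in the induced graph
    by_cases hut : u = t
    · refine leaf_ball (u := ⟨v, hvt⟩) ?_
      intro z hz
      rw [induce_adj'] at hz
      exact absurd ((huniq z.1 hz).trans hut) z.2
    · refine leaf_ball (u := ⟨u, hut⟩) ?_
      intro z hz
      rw [induce_adj'] at hz
      exact Subtype.ext (huniq z.1 hz)
  -- disconnectedness after deleting v or a
  have hnconnV : ¬ (T'.induce {z | z ≠ Sum.inl (Sum.inl v)}).Connected := by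
    rw [connected_congr (isoInduceNe' (isoMain G v) (Sum.inl (Sum.inl v)) (Sum.inl v) rfl)]
    refine not_connected_of_isolated (x := ⟨Sum.inr 0, by simp⟩) (z₀ := ⟨Sum.inr 1, by simp⟩)
      (by simp [Subtype.ext_iff]) ?_
    rintro ⟨(y | j), hz⟩ hadj
    · rw [induce_adj', attach3_adj_inr_inl] at hadj
      exact hz (by rw [hadj.1])
    · rw [induce_adj', attach3_adj_inr_inr] at hadj
      rw [gadgetPg_adj] at hadj
      rcases hadj with ⟨h1, -⟩ | ⟨h2, -⟩
      · exact absurd h1 (by decide)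
      · exact absurd h2 (by decide)
  have hnconnA : ¬ (T'.induce {z | z ≠ Sum.inl (Sum.inr 0)}).Connected := by
    rw [connected_congr (isoInduceNe' (isoMain G v) (Sum.inl (Sum.inr 0)) (Sum.inr 1) rfl)]
    refine not_connected_of_isolated (x := ⟨Sum.inr 2, by simp⟩) (z₀ := ⟨Sum.inr 0, by simp⟩)
      (by simp [Subtype.ext_iff]) ?_
    rintro ⟨(y | j), hz⟩ hadj
    · rw [induce_adj', attach3_adj_inr_inl] at hadj
      have := hadj.2
      simp [gadgetAtt] at this
    · rw [induce_adj', attach3_adj_inr_inr, gadgetPg_adj] at hadj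
      rcases hadj with ⟨h1, -⟩ | ⟨-, h2⟩
      · exact absurd h1 (by decide)
      · exact hz (by rw [h2])
  constructor
  · -- T' critical → G critical
    intro hcrit x hx
    by_cases hxv : x = v
    · subst hxv
      have hlt := hcrit (Sum.inr 0) (connW.mpr hx)
      rw [hΓW hx, hΓT'] at hlt
      omega
    · have hvx : v ≠ x := fun h => hxv h.symm
      have hlt := hcrit (Sum.inl (Sum.inl x)) ((connT x hvx).mpr hx)
      rw [hΓT x hvx hx, hΓT'] at hlt
      omega
  · -- G critical → T' critical
    intro hcrit z hz
    rcases z with ((t | i) | i0)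
    · by_cases htv : t = v
      · subst htv
        exact absurd hz hnconnV
      · have hvt : v ≠ t := fun h => htv h.symm
        have hGt : (G.induce {y | y ≠ t}).Connected := (connT t hvt).mp hz
        have hlt := hcrit t hGt
        rw [hΓT t hvt hGt, hΓT']
        omega
    · fin_cases i
      · exact absurd hz hnconnA
      · -- deleting b
        have hGv : (G.induce {y | y ≠ v}).Connected := connB.mp hz
        have hlt := hcrit v hGv
        calc eternalNum (T'.induce {z | z ≠ Sum.inl (Sum.inr 1)}) 2
            ≤ eternalNum (G.induce {y | y ≠ v}) 2 + 1 := hΓB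
          _ ≤ eternalNum G 2 := by omega
          _ < eternalNum T' 2 := by omega
    · -- deleting w
      have hi0 : i0 = 0 := Subsingleton.elim _ _
      subst hi0
      have hGv : (G.induce {y | y ≠ v}).Connected := connW.mp hz
      have hlt := hcrit v hGv
      rw [hΓW hGv, hΓT']
      omega

end EternalDom
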